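/- arXiv:2107.07245 — 4 statements merged into one kernel-verified Lean document; each statement's English description precedes it below -/
import Mathlib

section
/- For complex q with |q| < 1, ∑_{n∈ℤ} q^{n²} = ∏_{n=1}^∞ (1 - q^{2n})(1 + q^{2n-1})². -/
open Finset Filter Complex Topology

namespace JTP

noncomputable section

def bb (q : ℂ) (k : ℕ) : ℂ := ∏ j ∈ Finset.range k, (1 - q ^ (2 * (j + 1)))

def gb (q : ℂ) : ℕ → ℕ → ℂ
  | 0, 0 => 1
  | 0, _ + 1 => 0
  | _ + 1, 0 => 1
  | m + 1, k + 1 => gb q m (k + 1) + q ^ (2 * m) * gb q m k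

variable (q : ℂ)

@[simp] lemma gb_zero_right (m : ℕ) : gb q m 0 = 1 := by cases m <;> rfl

lemma gb_eq_zero : ∀ {m k : ℕ}, m < k → gb q m k = 0
  | 0, k + 1, _ => rfl
  | m + 1, k + 1, h => by
      rw [gb, gb_eq_zero (by omega), gb_eq_zero (by omega)]
      ring

lemma gb_diag : ∀ m : ℕ, gb q m m = q ^ (m * (m - 1))
  | 0 => rfl
  | m + 1 => by
      rw [gb, gb_eq_zero q (by omega), gb_diag m, zero_add, ← pow_add]
      congr 1
      cases m <;> simp <;> ring

lemma gauss (m : ℕ) (x : ℂ) :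
    ∏ i ∈ Finset.range m, (1 + x * q ^ (2 * i)) =
      ∑ k ∈ Finset.range (m + 1), gb q m k * x ^ k := by
  induction m with
  | zero => simp [gb]
  | succ m ih =>
      have e0 : ∑ k ∈ Finset.range (m + 1 + 1), gb q m k * x ^ k
          = (∑ k ∈ Finset.range (m + 1), gb q m (k + 1) * x ^ (k + 1)) + 1 := by
        rw [Finset.sum_range_succ' (fun k => gb q m k * x ^ k) (m + 1)]
        simp
      have e1 : ∑ k ∈ Finset.range (m + 1 + 1), gb q m k * x ^ k
          = ∑ k ∈ Finset.range (m + 1), gb q m k * x ^ k := by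
        rw [Finset.sum_range_succ, gb_eq_zero q (by omega)]
        ring
      rw [Finset.prod_range_succ, ih]
      rw [Finset.sum_range_succ' (fun k => gb q (m + 1) k * x ^ k) (m + 1)]
      simp only [gb, pow_zero, mul_one, gb_zero_right, add_mul]
      rw [Finset.sum_add_distrib]
      have e2 : ∑ k ∈ Finset.range (m + 1), q ^ (2 * m) * gb q m k * x ^ (k + 1)
          = (∑ k ∈ Finset.range (m + 1), gb q m k * x ^ k) * (x * q ^ (2 * m)) := by
        rw [Finset.sum_mul]
        exact Finset.sum_congr rfl fun k _ => by ring
      rw [e2]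
      linear_combination e0 - e1

lemma bb_succ (j : ℕ) : bb q (j + 1) = bb q j * (1 - q ^ (2 * (j + 1))) :=
  Finset.prod_range_succ _ _

@[simp] lemma bb_zero : bb q 0 = 1 := rfl

lemma gbD : ∀ m k : ℕ, k ≤ m →
    gb q m k * (bb q (m - k) * bb q k) = q ^ (k * (k - 1)) * bb q m := by
  intro m
  induction m with
  | zero => intro k hk; interval_cases k; simp [gb]
  | succ m ih =>
    intro k hk
    match k with
    | 0 => simp
    | k + 1 =>
      rcases eq_or_lt_of_le hk with he | hlt
      · obtain rfl : k = m := by omega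
        rw [gb_diag, Nat.sub_self, Nat.add_sub_cancel]
        simp [mul_comm]
      · obtain ⟨a, rfl⟩ : ∃ a, m = a + (k + 1) := ⟨m - (k + 1), by omega⟩
        have h1 := ih (k + 1) (by omega)
        have h2 := ih k (by omega)
        have e1 : a + (k + 1) - (k + 1) = a := by omega
        have e2 : a + (k + 1) - k = a + 1 := by omega
        have e3 : a + (k + 1) + 1 - (k + 1) = a + 1 := by omega
        rw [e1, Nat.add_sub_cancel, bb_succ q k] at h1
        rw [e2, bb_succ q a] at h2
        have he1 : q ^ (2 * (a + (k + 1))) * q ^ (k * (k - 1)) =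
            q ^ ((k + 1) * k) * q ^ (2 * (a + 1)) := by
          rw [← pow_add, ← pow_add]
          congr 1
          cases k with
          | zero => ring
          | succ s => simp only [Nat.succ_sub_one]; ring
        have he2 : q ^ (2 * (a + 1)) * q ^ (2 * (k + 1)) = q ^ (2 * (a + (k + 1) + 1)) := by
          rw [← pow_add]; congr 1; ring
        rw [gb, e3, Nat.add_sub_cancel, bb_succ q a, bb_succ q k, bb_succ q (a + (k + 1))]
        linear_combination (1 - q ^ (2 * (a + 1))) * h1 +
          q ^ (2 * (a + (k + 1))) * (1 - q ^ (2 * (k + 1))) * h2 +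
          bb q (a + (k + 1)) * (1 - q ^ (2 * (k + 1))) * he1 -
          q ^ ((k + 1) * k) * bb q (a + (k + 1)) * he2

lemma one_sub_pow_ne_zero (hq : ‖q‖ < 1) {j : ℕ} (hj : j ≠ 0) : 1 - q ^ j ≠ 0 := by
  have h2 : ‖q ^ j‖ < 1 := by
    rw [norm_pow]; exact pow_lt_one₀ (norm_nonneg q) hq hj
  intro h
  have : q ^ j = 1 := by linear_combination -h
  rw [this, norm_one] at h2
  exact lt_irrefl _ h2

lemma bb_ne_zero (hq : ‖q‖ < 1) (k : ℕ) : bb q k ≠ 0 := by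
  refine Finset.prod_ne_zero_iff.mpr fun j _ => ?_
  exact one_sub_pow_ne_zero q hq (by omega)

lemma finite_jtp (hq : ‖q‖ < 1) (hq0 : q ≠ 0) (N : ℕ) :
    ∏ j ∈ Finset.range N, (1 - q ^ (2 * (j + 1))) * (1 + q ^ (2 * (j + 1) - 1)) ^ 2 =
      ∑ k ∈ Finset.range (2 * N + 1),
        bb q N * bb q (2 * N) / (bb q (2 * N - k) * bb q k) *
          q ^ (((k : ℤ) - N).natAbs ^ 2) := by
  set P : ℂ := ∏ j ∈ Finset.range N, (1 + q ^ (2 * (j + 1) - 1)) with hP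
  have ha0 : q ^ (2 * N - 1) ≠ 0 := pow_ne_zero _ hq0
  -- step A : expand the shifted product via the Gauss identity
  have hA : ∏ i ∈ Finset.range (2 * N), (q ^ (2 * N - 1) + q ^ (2 * i)) =
      ∑ k ∈ Finset.range (2 * N + 1), gb q (2 * N) k * q ^ ((2 * N - 1) * (2 * N - k)) := by
    have h1 : ∀ i ∈ Finset.range (2 * N), q ^ (2 * N - 1) + q ^ (2 * i) =
        q ^ (2 * N - 1) * (1 + (q ^ (2 * N - 1))⁻¹ * q ^ (2 * i)) := by
      intro i _; field_simp
    rw [Finset.prod_congr rfl h1, Finset.prod_mul_distrib, Finset.prod_const,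
      Finset.card_range, gauss, Finset.mul_sum]
    refine Finset.sum_congr rfl fun k hk => ?_
    have hk' : k ≤ 2 * N := by have := Finset.mem_range.mp hk; omega
    conv_rhs => rw [pow_mul, pow_sub₀ _ ha0 hk']
    field_simp
    simp [ha0]
  -- step B : the shifted product equals q^(N*(3N-2)) * P^2
  have hB : ∏ i ∈ Finset.range (2 * N), (q ^ (2 * N - 1) + q ^ (2 * i)) =
      q ^ (N * (3 * N - 2)) * P ^ 2 := by
    have h2N : 2 * N = N + N := by ring
    rw [h2N, Finset.prod_range_add]
    have hfst : ∏ i ∈ Finset.range N, (q ^ (N + N - 1) + q ^ (2 * i)) =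
        q ^ (N * (N - 1)) * P := by
      have h1 : ∀ i ∈ Finset.range N, q ^ (N + N - 1) + q ^ (2 * i) =
          q ^ (2 * i) * (1 + q ^ (2 * ((N - 1 - i) + 1) - 1)) := by
        intro i hi
        have hiN : i < N := Finset.mem_range.mp hi
        have he : N + N - 1 = 2 * i + (2 * ((N - 1 - i) + 1) - 1) := by omega
        rw [he, pow_add]
        ring
      rw [Finset.prod_congr rfl h1, Finset.prod_mul_distrib]
      congr 1
      · rw [Finset.prod_pow_eq_pow_sum]
        congr 1
        have h2 := Finset.sum_range_id_mul_two N
        have h3 : ∑ i ∈ Finset.range N, 2 * i = (∑ i ∈ Finset.range N, i) * 2 := by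
          rw [Finset.sum_mul]
          exact Finset.sum_congr rfl fun i _ => by ring
        omega
      · exact Finset.prod_range_reflect (fun j => 1 + q ^ (2 * (j + 1) - 1)) N
    have hsnd : ∏ i ∈ Finset.range N, (q ^ (N + N - 1) + q ^ (2 * (N + i))) =
        q ^ (N * (N + N - 1)) * P := by
      have h1 : ∀ i ∈ Finset.range N, q ^ (N + N - 1) + q ^ (2 * (N + i)) =
          q ^ (N + N - 1) * (1 + q ^ (2 * (i + 1) - 1)) := by
        intro i hi
        have hiN : i < N := Finset.mem_range.mp hi
        have he : 2 * (N + i) = (N + N - 1) + (2 * (i + 1) - 1) := by omega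
        rw [he, pow_add]
        ring
      rw [Finset.prod_congr rfl h1, Finset.prod_mul_distrib, Finset.prod_const,
        Finset.card_range, ← pow_mul, Nat.mul_comm (N + N - 1) N, ← hP]
    rw [hfst, hsnd]
    have he : N * (3 * N - 2) = N * (N - 1) + N * (N + N - 1) := by
      cases N with
      | zero => rfl
      | succ n =>
        have h2 : 3 * (n + 1) - 2 = 3 * n + 1 := by omega
        have h3 : n + 1 + (n + 1) - 1 = 2 * n + 1 := by omega
        rw [h2, h3, Nat.succ_sub_one]
        ring
    rw [he, pow_add]
    ring
  -- termwise identification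
  have hterm : ∀ k ∈ Finset.range (2 * N + 1),
      bb q N * (gb q (2 * N) k * q ^ ((2 * N - 1) * (2 * N - k))) =
        q ^ (N * (3 * N - 2)) *
          (bb q N * bb q (2 * N) / (bb q (2 * N - k) * bb q k) *
            q ^ (((k : ℤ) - N).natAbs ^ 2)) := by
    intro k hk
    have hk' : k ≤ 2 * N := by have := Finset.mem_range.mp hk; omega
    have hD := gbD q (2 * N) k hk'
    have hb1 := bb_ne_zero q hq (2 * N - k)
    have hb2 := bb_ne_zero q hq k
    have hexp : (2 * N - 1) * (2 * N - k) + k * (k - 1) =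
        N * (3 * N - 2) + ((k : ℤ) - N).natAbs ^ 2 := by
      rcases Nat.eq_zero_or_pos N with rfl | hN
      · interval_cases k <;> simp
      · rcases le_total k N with hkN | hkN
        · have h1 : ((k : ℤ) - N).natAbs = N - k := by omega
          rcases Nat.eq_zero_or_pos k with rfl | hk0
          · rw [h1]
            simp only [Nat.sub_zero]
            zify [show (1:ℕ) ≤ 2 * N by omega, show (2:ℕ) ≤ 3 * N by omega]
            ring
          · rw [h1]
            zify [hk', hk0, hkN, show (1:ℕ) ≤ 2 * N by omega,
              show (2:ℕ) ≤ 3 * N by omega]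
            ring
        · have h1 : ((k : ℤ) - N).natAbs = k - N := by omega
          rw [h1]
          zify [hk', hkN, show (1:ℕ) ≤ k by omega, show (1:ℕ) ≤ 2 * N by omega,
            show (2:ℕ) ≤ 3 * N by omega]
          ring
    have hpow : q ^ ((2 * N - 1) * (2 * N - k)) * q ^ (k * (k - 1)) =
        q ^ (N * (3 * N - 2)) * q ^ (((k : ℤ) - N).natAbs ^ 2) := by
      rw [← pow_add, ← pow_add, hexp]
    field_simp
    linear_combination bb q N * q ^ ((2 * N - 1) * (2 * N - k)) * hD +
      bb q N * bb q (2 * N) * hpow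
  -- put everything together
  have hq3 : q ^ (N * (3 * N - 2)) ≠ 0 := pow_ne_zero _ hq0
  apply mul_left_cancel₀ hq3
  calc q ^ (N * (3 * N - 2)) *
        ∏ j ∈ Finset.range N, (1 - q ^ (2 * (j + 1))) * (1 + q ^ (2 * (j + 1) - 1)) ^ 2
      = bb q N * (q ^ (N * (3 * N - 2)) * P ^ 2) := by
        simp only [Finset.prod_mul_distrib, hP, ← Finset.prod_pow, bb]
        ring
    _ = bb q N * ∑ k ∈ Finset.range (2 * N + 1),
          gb q (2 * N) k * q ^ ((2 * N - 1) * (2 * N - k)) := by rw [← hB, hA]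
    _ = ∑ k ∈ Finset.range (2 * N + 1),
          bb q N * (gb q (2 * N) k * q ^ ((2 * N - 1) * (2 * N - k))) := Finset.mul_sum _ _ _
    _ = ∑ k ∈ Finset.range (2 * N + 1), q ^ (N * (3 * N - 2)) *
          (bb q N * bb q (2 * N) / (bb q (2 * N - k) * bb q k) *
            q ^ (((k : ℤ) - N).natAbs ^ 2)) := Finset.sum_congr rfl hterm
    _ = q ^ (N * (3 * N - 2)) * ∑ k ∈ Finset.range (2 * N + 1),
          bb q N * bb q (2 * N) / (bb q (2 * N - k) * bb q k) *
            q ^ (((k : ℤ) - N).natAbs ^ 2) := (Finset.mul_sum _ _ _).symm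

lemma weier (s : Finset ℕ) (f : ℕ → ℝ) (h0 : ∀ j ∈ s, 0 ≤ f j) (h1 : ∀ j ∈ s, f j ≤ 1) :
    1 - ∑ j ∈ s, f j ≤ ∏ j ∈ s, (1 - f j) := by
  induction s using Finset.cons_induction with
  | empty => simp
  | cons a s ha ih =>
    rw [Finset.prod_cons, Finset.sum_cons]
    have hP : 1 - ∑ j ∈ s, f j ≤ ∏ j ∈ s, (1 - f j) :=
      ih (fun j hj => h0 j (Finset.mem_cons_of_mem hj))
        (fun j hj => h1 j (Finset.mem_cons_of_mem hj))
    have hfa0 := h0 a (Finset.mem_cons_self a s)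
    have hfa1 := h1 a (Finset.mem_cons_self a s)
    have hsum0 : 0 ≤ ∑ j ∈ s, f j :=
      Finset.sum_nonneg fun j hj => h0 j (Finset.mem_cons_of_mem hj)
    nlinarith

lemma summable_r_pow (hq : ‖q‖ < 1) :
    Summable (fun j : ℕ => ‖q‖ ^ (2 * (j + 1))) := by
  have h0 : 0 ≤ ‖q‖ := norm_nonneg q
  have h2 : ‖q‖ ^ 2 < 1 := by nlinarith
  have hg : Summable (fun j : ℕ => (‖q‖ ^ 2) ^ j) :=
    summable_geometric_of_lt_one (by positivity) h2
  have := (summable_nat_add_iff 1).mpr hg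
  refine this.congr fun j => ?_
  rw [← pow_mul]

lemma exists_pos_le_abs_bb (hq : ‖q‖ < 1) :
    ∃ δ : ℝ, 0 < δ ∧ ∀ k, δ ≤ ‖bb q k‖ := by
  have h0 : 0 ≤ ‖q‖ := norm_nonneg q
  set f : ℕ → ℝ := fun j => ‖q‖ ^ (2 * (j + 1)) with hf
  have hfs : Summable f := summable_r_pow q hq
  have hf0 : ∀ j, 0 ≤ f j := fun j => by positivity
  have hf1 : ∀ j, f j ≤ 1 := fun j => pow_le_one₀ h0 hq.le
  -- choose M with tail sum small
  obtain ⟨M, hM⟩ : ∃ M : ℕ, ∑' j : ℕ, f (j + M) ≤ 1 / 2 := by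
    have := tendsto_sum_nat_add f
    have h2 := this.eventually (eventually_le_nhds (by norm_num : (0:ℝ) < 1/2))
    exact h2.exists
  have htail : ∀ k, M ≤ k → ∑ j ∈ Finset.Ico M k, f j ≤ 1 / 2 := by
    intro k hk
    have h1 : ∑ j ∈ Finset.Ico M k, f j = ∑ i ∈ Finset.range (k - M), f (i + M) := by
      rw [Finset.sum_Ico_eq_sum_range]
      exact Finset.sum_congr rfl fun i _ => by rw [add_comm]
    rw [h1]
    refine le_trans ?_ hM
    exact Summable.sum_le_tsum _ (fun i _ => hf0 _) ((summable_nat_add_iff M).mpr hfs)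
  -- positivity of each |bb k|
  have hbpos : ∀ k, 0 < ‖bb q k‖ := fun k =>
    norm_pos_iff.mpr (bb_ne_zero q hq k)
  -- lower bound for k ≥ M
  have hge : ∀ k, M ≤ k → ‖bb q M‖ * (1 / 2) ≤ ‖bb q k‖ := by
    intro k hk
    have hsplit : bb q M * ∏ j ∈ Finset.Ico M k, (1 - q ^ (2 * (j + 1))) = bb q k :=
      Finset.prod_range_mul_prod_Ico _ hk
    have habs : ‖bb q k‖ =
        ‖bb q M‖ * ∏ j ∈ Finset.Ico M k, ‖1 - q ^ (2 * (j + 1))‖ := by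
      rw [← hsplit, norm_mul, norm_prod]
    rw [habs]
    have hstep : ∀ j ∈ Finset.Ico M k, 1 - f j ≤ ‖1 - q ^ (2 * (j + 1))‖ := by
      intro j _
      have := norm_sub_norm_le (1 : ℂ) (q ^ (2 * (j + 1)))
      simpa [hf] using this
    have h1 : 1 - ∑ j ∈ Finset.Ico M k, f j ≤
        ∏ j ∈ Finset.Ico M k, ‖1 - q ^ (2 * (j + 1))‖ := by
      refine le_trans (weier _ f (fun j _ => hf0 j) (fun j _ => hf1 j)) ?_
      exact Finset.prod_le_prod (fun j hj => by linarith [hf1 j]) hstep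
    have h2 : (1:ℝ) / 2 ≤ ∏ j ∈ Finset.Ico M k, ‖1 - q ^ (2 * (j + 1))‖ := by
      have := htail k hk
      linarith
    have := mul_le_mul_of_nonneg_left h2 (hbpos M).le
    linarith
  -- minimum over the initial segment
  obtain ⟨k₀, _, hk₀⟩ := Finset.exists_min_image (Finset.range (M + 1))
    (fun k => ‖bb q k‖) ⟨0, Finset.mem_range.mpr (by omega)⟩
  refine ⟨min (‖bb q k₀‖) (‖bb q M‖ * (1 / 2)), ?_, ?_⟩
  · have := hbpos k₀
    have := hbpos M
    positivity
  · intro k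
    rcases le_or_gt k M with h | h
    · exact le_trans (min_le_left _ _) (hk₀ k (Finset.mem_range.mpr (by omega)))
    · exact le_trans (min_le_right _ _) (hge k h.le)

lemma abs_bb_le (hq : ‖q‖ < 1) (k : ℕ) :
    ‖bb q k‖ ≤ Real.exp (∑' j : ℕ, ‖q‖ ^ (2 * (j + 1))) := by
  have h0 : 0 ≤ ‖q‖ := norm_nonneg q
  have hfs := summable_r_pow q hq
  calc ‖bb q k‖ = ∏ j ∈ Finset.range k, ‖1 - q ^ (2 * (j + 1))‖ := by
        rw [bb, norm_prod]
    _ ≤ ∏ j ∈ Finset.range k, (1 + ‖q‖ ^ (2 * (j + 1))) := by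
        refine Finset.prod_le_prod (fun j _ => norm_nonneg _) fun j _ => ?_
        have := norm_sub_le (1 : ℂ) (q ^ (2 * (j + 1)))
        simpa using this
    _ ≤ ∏ j ∈ Finset.range k, Real.exp (‖q‖ ^ (2 * (j + 1))) := by
        refine Finset.prod_le_prod (fun j _ => by positivity) fun j _ => ?_
        have := Real.add_one_le_exp (‖q‖ ^ (2 * (j + 1)))
        linarith
    _ = Real.exp (∑ j ∈ Finset.range k, ‖q‖ ^ (2 * (j + 1))) := by
        rw [Real.exp_sum]
    _ ≤ Real.exp (∑' j : ℕ, ‖q‖ ^ (2 * (j + 1))) := by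
        apply Real.exp_le_exp.mpr
        exact Summable.sum_le_tsum _ (fun j _ => by positivity) hfs

lemma multipliable_of_norm_bound (f : ℕ → ℂ) (c : ℝ) (r : ℝ) (hr0 : 0 ≤ r) (hr1 : r < 1)
    (hne : ∀ n, f n ≠ 0) (hb : ∀ n, ‖f n - 1‖ ≤ c * r ^ n) : Multipliable f := by
  have hlog : Summable fun n => Complex.log (f n) := by
    have hg : Summable (fun n : ℕ => (3 / 2 : ℝ) * (c * r ^ n)) :=
      ((summable_geometric_of_lt_one hr0 hr1).mul_left c).mul_left _
    refine Summable.of_norm_bounded_eventually_nat hg ?_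
    have h0 : Filter.Tendsto (fun n : ℕ => c * r ^ n) atTop (nhds 0) := by
      simpa using (tendsto_pow_atTop_nhds_zero_of_lt_one hr0 hr1).const_mul c
    have h1 : ∀ᶠ n : ℕ in atTop, c * r ^ n ≤ 1 / 2 :=
      h0.eventually (eventually_le_nhds (by norm_num))
    filter_upwards [h1] with n hn
    have h2 : ‖f n - 1‖ ≤ 1 / 2 := le_trans (hb n) hn
    have h3 : Complex.log (f n) = Complex.log (1 + (f n - 1)) := by ring_nf
    rw [h3]
    calc ‖Complex.log (1 + (f n - 1))‖ ≤ 3 / 2 * ‖f n - 1‖ :=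
          Complex.norm_log_one_add_half_le_self h2
      _ ≤ 3 / 2 * (c * r ^ n) := by nlinarith [hb n]
  exact Complex.multipliable_of_summable_log hlog

lemma one_add_pow_ne_zero (hq : ‖q‖ < 1) {j : ℕ} (hj : j ≠ 0) : 1 + q ^ j ≠ 0 := by
  have h2 : ‖q ^ j‖ < 1 := by
    rw [norm_pow]; exact pow_lt_one₀ (norm_nonneg q) hq hj
  intro h
  have : q ^ j = -1 := by linear_combination h
  rw [this] at h2
  simp at h2

lemma multipliable_bb_factor (hq : ‖q‖ < 1) :
    Multipliable fun j : ℕ => 1 - q ^ (2 * (j + 1)) := by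
  refine multipliable_of_norm_bound _ (‖q‖ ^ 2) (‖q‖ ^ 2)
    (by positivity) (by nlinarith [norm_nonneg q]) 
    (fun j => one_sub_pow_ne_zero q hq (by omega)) fun j => ?_
  have : ‖(1 : ℂ) - q ^ (2 * (j + 1)) - 1‖ = ‖q‖ ^ (2 * (j + 1)) := by
    rw [sub_sub_cancel_left, norm_neg, norm_pow]
  rw [this, ← pow_mul, ← pow_add]
  apply pow_le_pow_of_le_one (norm_nonneg q) hq.le
  omega

lemma multipliable_G (hq : ‖q‖ < 1) :
    Multipliable fun j : ℕ => (1 - q ^ (2 * (j + 1))) * (1 + q ^ (2 * (j + 1) - 1)) ^ 2 := by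
  have h0 : 0 ≤ ‖q‖ := norm_nonneg q
  refine multipliable_of_norm_bound _ (7 * ‖q‖) (‖q‖)
    h0 hq (fun j => ?_) fun j => ?_
  · exact mul_ne_zero (one_sub_pow_ne_zero q hq (by omega))
      (pow_ne_zero _ (one_add_pow_ne_zero q hq (by omega)))
  · set a : ℂ := q ^ (2 * (j + 1)) with hadef
    set b : ℂ := q ^ (2 * (j + 1) - 1) with hbdef
    have hmain : (1 - a) * (1 + b) ^ 2 - 1 = 2 * b + b ^ 2 - a - 2 * (a * b) - a * b ^ 2 := by
      ring
    rw [hmain]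
    have hb' : ‖b‖ ≤ ‖q‖ ^ (2 * j + 1) := by
      rw [hbdef, norm_pow]
      apply pow_le_pow_of_le_one h0 hq.le
      omega
    have ha' : ‖a‖ ≤ ‖q‖ ^ (2 * j + 1) := by
      rw [hadef, norm_pow]
      apply pow_le_pow_of_le_one h0 hq.le
      omega
    have ht1 : ‖q‖ ^ (2 * j + 1) ≤ ‖q‖ ^ (j + 1) :=
      pow_le_pow_of_le_one h0 hq.le (by omega)
    have ht0 : (0:ℝ) ≤ ‖q‖ ^ (2 * j + 1) := by positivity
    have ht2 : ‖q‖ ^ (j + 1) ≤ 1 := pow_le_one₀ h0 hq.le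
    have hq1 : ‖q‖ ^ (j + 1) = ‖q‖ * ‖q‖ ^ j := by
      rw [pow_succ]; ring
    have hchain : ‖2 * b + b ^ 2 - a - 2 * (a * b) - a * b ^ 2‖ ≤
        2 * ‖b‖ + ‖b‖ ^ 2 + ‖a‖ + 2 * (‖a‖ * ‖b‖) + ‖a‖ * ‖b‖ ^ 2 := by
      calc ‖2 * b + b ^ 2 - a - 2 * (a * b) - a * b ^ 2‖
          ≤ ‖2 * b + b ^ 2 - a - 2 * (a * b)‖ + ‖a * b ^ 2‖ := norm_sub_le _ _
        _ ≤ (‖2 * b + b ^ 2 - a‖ + ‖2 * (a * b)‖) + ‖a * b ^ 2‖ := by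
            gcongr; exact norm_sub_le _ _
        _ ≤ ((‖2 * b + b ^ 2‖ + ‖a‖) + ‖2 * (a * b)‖) + ‖a * b ^ 2‖ := by
            gcongr; exact norm_sub_le _ _
        _ ≤ (((‖2 * b‖ + ‖b ^ 2‖) + ‖a‖) + ‖2 * (a * b)‖) + ‖a * b ^ 2‖ := by
            gcongr; exact norm_add_le _ _
        _ = 2 * ‖b‖ + ‖b‖ ^ 2 + ‖a‖ + 2 * (‖a‖ * ‖b‖) + ‖a‖ * ‖b‖ ^ 2 := by
            simp [norm_mul, norm_pow]; try ring
    refine le_trans hchain ?_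
    have hbn : (0:ℝ) ≤ ‖b‖ := norm_nonneg _
    have han : (0:ℝ) ≤ ‖a‖ := norm_nonneg _
    have hb1 : ‖b‖ ≤ 1 := le_trans hb' (le_trans ht1 ht2)
    have ha1 : ‖a‖ ≤ 1 := le_trans ha' (le_trans ht1 ht2)
    calc 2 * ‖b‖ + ‖b‖ ^ 2 + ‖a‖ + 2 * (‖a‖ * ‖b‖) + ‖a‖ * ‖b‖ ^ 2
        ≤ 7 * ‖q‖ ^ (2 * j + 1) := by nlinarith
      _ ≤ 7 * (‖q‖ * ‖q‖ ^ j) := by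
          rw [← hq1]; nlinarith
      _ = 7 * ‖q‖ * ‖q‖ ^ j := by ring

end

end JTP

open JTP Finset Filter Topology in
theorem jacobi_triple_product_theta (q : ℂ) (hq : ‖q‖ < 1) :
    ∑' n : ℤ, q ^ (n ^ 2) =
      ∏' n : ℕ, (1 - q ^ (2 * (n + 1))) * (1 + q ^ (2 * (n + 1) - 1)) ^ 2 := by
  rcases eq_or_ne q 0 with rfl | hq0
  · have hL : ∑' n : ℤ, (0:ℂ) ^ (n ^ 2) = 1 := by
      rw [tsum_eq_single 0 (fun n hn => zero_zpow _ (pow_ne_zero 2 hn))]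
      norm_num
    have hR : ∀ n : ℕ, (1 - (0:ℂ) ^ (2 * (n + 1))) * (1 + (0:ℂ) ^ (2 * (n + 1) - 1)) ^ 2 = 1 := by
      intro n
      rw [zero_pow (by omega), zero_pow (by omega)]
      norm_num
    rw [hL, tprod_congr hR, tprod_one]
  · have hr0 : (0:ℝ) ≤ ‖q‖ := norm_nonneg q
    obtain ⟨δ, hδ0, hδ⟩ := exists_pos_le_abs_bb q hq
    set B : ℝ := Real.exp (∑' j : ℕ, ‖q‖ ^ (2 * (j + 1))) with hBdef
    have hB : ∀ k, ‖bb q k‖ ≤ B := abs_bb_le q hq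
    have hB0 : 0 ≤ B := Real.exp_nonneg _
    have mbb := multipliable_bb_factor q hq
    set L : ℂ := ∏' j : ℕ, (1 - q ^ (2 * (j + 1))) with hLdef
    have hbbL : Tendsto (fun k => bb q k) atTop (𝓝 L) := mbb.hasProd.tendsto_prod_nat
    have hL0 : L ≠ 0 := by
      have h1 : Tendsto (fun k => ‖bb q k‖) atTop (𝓝 (‖L‖)) :=
        (continuous_norm.tendsto L).comp hbbL
      have h2 : δ ≤ ‖L‖ := ge_of_tendsto' h1 hδ
      intro h
      rw [h] at h2
      simp at h2
      linarith
    -- local abbreviations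
    set cc : ℕ → ℕ → ℂ := fun N k =>
      bb q N * bb q (2 * N) / (bb q (2 * N - k) * bb q k) with hcc
    set F : ℕ → ℤ → ℂ := fun N n =>
      if n.natAbs ≤ N then cc N (n + N).toNat * q ^ (n.natAbs ^ 2) else 0 with hF
    -- the partial products equal the truncated theta sums
    have hFsum : ∀ N : ℕ, ∑' n : ℤ, F N n =
        ∏ j ∈ Finset.range N, (1 - q ^ (2 * (j + 1))) * (1 + q ^ (2 * (j + 1) - 1)) ^ 2 := by
      intro N
      have hout : ∀ n ∉ Finset.Icc (-(N:ℤ)) (N:ℤ), F N n = 0 := by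
        intro n hn
        rw [hF]
        have : ¬ n.natAbs ≤ N := by
          simp only [Finset.mem_Icc] at hn
          omega
        exact if_neg this
      rw [tsum_eq_sum hout, finite_jtp q hq hq0 N]
      refine Finset.sum_nbij' (i := fun n => (n + N).toNat) (j := fun k => (k : ℤ) - N)
        ?_ ?_ ?_ ?_ ?_
      · intro n hn
        simp only [Finset.mem_Icc] at hn
        simp only [Finset.mem_range]
        omega
      · intro k hk
        simp only [Finset.mem_range] at hk
        simp only [Finset.mem_Icc]
        omega
      · intro n hn
        simp only [Finset.mem_Icc] at hn
        omega
      · intro k hk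
        simp only [Finset.mem_range] at hk
        omega
      · intro n hn
        simp only [Finset.mem_Icc] at hn
        simp only [hF]
        rw [if_pos (show n.natAbs ≤ N by omega)]
        have h1 : (((n + N).toNat : ℤ) - N) = n := by omega
        rw [h1]
    -- Tannery's theorem
    have hsummable : Summable (fun n : ℤ => B * B / (δ * δ) * ‖q‖ ^ n.natAbs) := by
      apply Summable.mul_left
      apply Summable.of_nat_of_neg
      · simpa using summable_geometric_of_lt_one hr0 hq
      · simpa using summable_geometric_of_lt_one hr0 hq
    have hpointwise : ∀ n : ℤ,
        Tendsto (fun N => F N n) atTop (𝓝 (q ^ (n.natAbs ^ 2))) := by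
      intro n
      have hev : ∀ᶠ N in atTop, cc N (n + N).toNat * q ^ (n.natAbs ^ 2) = F N n := by
        filter_upwards [eventually_ge_atTop n.natAbs] with N hN
        simp only [hF]
        rw [if_pos hN]
      refine Tendsto.congr' hev ?_
      have h2N : Tendsto (fun N : ℕ => 2 * N) atTop atTop :=
        tendsto_atTop.mpr fun b => eventually_atTop.2 ⟨b, fun N hN => by omega⟩
      have hup : Tendsto (fun N : ℕ => (n + N).toNat) atTop atTop :=
        tendsto_atTop.mpr fun b => eventually_atTop.2 ⟨b + n.natAbs, fun N hN => by omega⟩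
      have hdn : Tendsto (fun N : ℕ => (2 * N - (n + N).toNat : ℕ)) atTop atTop :=
        tendsto_atTop.mpr fun b => eventually_atTop.2 ⟨b + n.natAbs, fun N hN => by omega⟩
      have hnum : Tendsto (fun N => bb q N * bb q (2 * N)) atTop (𝓝 (L * L)) :=
        hbbL.mul (hbbL.comp h2N)
      have hden : Tendsto (fun N : ℕ => bb q ((2 * N : ℕ) - (n + (N : ℤ)).toNat) * bb q ((n + (N : ℤ)).toNat))
          atTop (𝓝 (L * L)) := (hbbL.comp hdn).mul (hbbL.comp hup)
      have hccl : Tendsto (fun N => cc N (n + N).toNat) atTop (𝓝 1) := by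
        have := hnum.div hden (mul_ne_zero hL0 hL0)
        rw [div_self (mul_ne_zero hL0 hL0)] at this
        exact this
      have := hccl.mul_const (q ^ (n.natAbs ^ 2))
      rwa [one_mul] at this
    have hbound : ∀ᶠ N in atTop, ∀ n : ℤ,
        ‖F N n‖ ≤ B * B / (δ * δ) * ‖q‖ ^ n.natAbs := by
      refine Eventually.of_forall fun N n => ?_
      simp only [hF]
      split_ifs with h
      · rw [norm_mul]
        have h1 : ‖cc N (n + N).toNat‖ ≤ B * B / (δ * δ) := by
          simp only [hcc]
          rw [norm_div, norm_mul, norm_mul]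
          apply div_le_div₀ (by positivity) ?_ (by positivity) ?_
          · exact mul_le_mul (hB _) (hB _) (norm_nonneg _) hB0
          · exact mul_le_mul (hδ _) (hδ _) hδ0.le (norm_nonneg _)
        have h2 : ‖q ^ (n.natAbs ^ 2)‖ ≤ ‖q‖ ^ n.natAbs := by
          rw [norm_pow]
          exact pow_le_pow_of_le_one hr0 hq.le (Nat.le_self_pow two_ne_zero _)
        exact mul_le_mul h1 h2 (norm_nonneg _) (by positivity)
      · rw [norm_zero]
        positivity
    have hTan : Tendsto (fun N => ∑' n : ℤ, F N n) atTop
        (𝓝 (∑' n : ℤ, q ^ (n.natAbs ^ 2))) :=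
      tendsto_tsum_of_dominated_convergence hsummable hpointwise hbound
    -- the product side
    have hGP : Tendsto (fun N => ∏ j ∈ Finset.range N,
          (1 - q ^ (2 * (j + 1))) * (1 + q ^ (2 * (j + 1) - 1)) ^ 2) atTop
        (𝓝 (∏' n : ℕ, (1 - q ^ (2 * (n + 1))) * (1 + q ^ (2 * (n + 1) - 1)) ^ 2)) :=
      (multipliable_G q hq).hasProd.tendsto_prod_nat
    have hfun : (fun N => ∑' n : ℤ, F N n) = fun N => ∏ j ∈ Finset.range N,
        (1 - q ^ (2 * (j + 1))) * (1 + q ^ (2 * (j + 1) - 1)) ^ 2 := funext hFsum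
    rw [hfun] at hTan
    have huniq := tendsto_nhds_unique hTan hGP
    have hzpow : ∀ n : ℤ, q ^ (n ^ 2) = q ^ (n.natAbs ^ 2) := by
      intro n
      have h : (n ^ 2 : ℤ) = ((n.natAbs ^ 2 : ℕ) : ℤ) := by
        rw [Nat.cast_pow, Int.natAbs_sq]
      rw [h, zpow_natCast]
    rw [tsum_congr hzpow, huniq]
end

section
/- For every positive integer n, the number of representations of n as an ordered sum of two squares of integers equals 4·∑_{d∣n} χ(d), where χ is the nontrivial Dirichlet character mod 4. -/
/-- The nontrivial Dirichlet character mod 4, as a function on ℕ. -/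
def chi4 (d : ℕ) : ℤ :=
  if d % 4 = 1 then 1 else if d % 4 = 3 then -1 else 0

namespace TwoSq

open GaussianInt Zsqrtd

local notation "ℤi" => GaussianInt

/-- chi4 is totally multiplicative. -/
lemma chi4_mul (m n : ℕ) : chi4 (m * n) = chi4 m * chi4 n := by
  unfold chi4
  have h : (m * n) % 4 = (m % 4) * (n % 4) % 4 := Nat.mul_mod m n 4
  have hm : m % 4 < 4 := Nat.mod_lt _ (by norm_num)
  have hn : n % 4 < 4 := Nat.mod_lt _ (by norm_num)
  rw [h]
  interval_cases hm' : m % 4 <;> interval_cases hn' : n % 4 <;> norm_num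

lemma chi4_one : chi4 1 = 1 := by decide

lemma chi4_zero : chi4 0 = 0 := by decide

lemma chi4_pow (p k : ℕ) : chi4 (p ^ k) = (chi4 p) ^ k := by
  induction k with
  | zero => simpa using chi4_one
  | succ k ih => rw [pow_succ, pow_succ, chi4_mul, ih]

/-- The divisor sum. -/
noncomputable def S (n : ℕ) : ℤ := ∑ d ∈ n.divisors, chi4 d

/-- chi4 as an arithmetic function. -/
noncomputable def chiA : ArithmeticFunction ℤ := ⟨chi4, chi4_zero⟩

lemma chiA_isMult : chiA.IsMultiplicative :=
  ⟨chi4_one, fun {_ _} _ => chi4_mul _ _⟩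

lemma S_eq (n : ℕ) : S n = ((ArithmeticFunction.zeta : ArithmeticFunction ℕ) * chiA) n := by
  rw [ArithmeticFunction.coe_zeta_mul_apply]; rfl

lemma S_mul {m n : ℕ} (h : m.Coprime n) : S (m * n) = S m * S n := by
  simp only [S_eq]
  exact (ArithmeticFunction.isMultiplicative_zeta.natCast.mul chiA_isMult).map_mul_of_coprime h

lemma sum_neg_one_pow (m : ℕ) :
    ∑ j ∈ Finset.range m, ((-1 : ℤ)) ^ j = if Even m then 0 else 1 := by
  induction m with
  | zero => simp
  | succ m ih =>
    rw [Finset.sum_range_succ, ih]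
    rcases Nat.even_or_odd m with h | h
    · simp [h, Nat.even_add_one, Nat.not_odd_iff_even.2 h, h.neg_one_pow]
    · simp [Nat.not_even_iff_odd.2 h, h.neg_one_pow, Nat.even_add_one, Nat.not_odd_iff_even,
        Nat.odd_add_one]

lemma S_prime_pow {p : ℕ} (hp : p.Prime) (k : ℕ) :
    S (p ^ k) = ∑ j ∈ Finset.range (k + 1), (chi4 p) ^ j := by
  unfold S
  rw [Nat.divisors_prime_pow hp, Finset.sum_map]
  simp only [Function.Embedding.coeFn_mk, chi4_pow]



/-- The imaginary unit in ℤ[i]. -/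
def ii : GaussianInt := ⟨0, 1⟩

lemma ii_mul (z : GaussianInt) : ii * z = ⟨-z.im, z.re⟩ := by
  ext <;> simp [ii, Zsqrtd.re_mul, Zsqrtd.im_mul]

lemma ii_sq : ii * ii = -1 := by ext <;> simp [ii, Zsqrtd.re_mul, Zsqrtd.im_mul]

lemma ii_pow_four : ii ^ 4 = 1 := by
  have : ii ^ 4 = (ii * ii) * (ii * ii) := by ring
  rw [this, ii_sq]; ring

lemma isUnit_ii : IsUnit ii :=
  IsUnit.of_mul_eq_one (a := ii) ⟨0, -1⟩ (by ext <;> simp [ii, Zsqrtd.re_mul, Zsqrtd.im_mul])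

lemma ii_pow_mod (k : ℕ) : ii ^ k = ii ^ (k % 4) := by
  conv_lhs => rw [← Nat.div_add_mod k 4]
  rw [pow_add, pow_mul, ii_pow_four, one_pow, one_mul]

lemma isUnit_ii_pow (k : ℕ) : IsUnit (ii ^ k) := (isUnit_ii).pow k

/-- Classification of the units of ℤ[i]. -/
lemma unit_eq (u : GaussianInt) (hu : IsUnit u) :
    u = 1 ∨ u = -1 ∨ u = ii ∨ u = -ii := by
  have h1 : u.norm = 1 := by
    rw [Zsqrtd.norm_eq_one_iff' (by norm_num) u]; exact hu
  rw [Zsqrtd.norm_def] at h1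
  obtain ⟨a, b⟩ := u
  simp only at h1
  have h1' : a * a + b * b = 1 := by linarith
  have ha : -1 ≤ a ∧ a ≤ 1 := by constructor <;> nlinarith [mul_self_nonneg a, mul_self_nonneg b]
  have hb : -1 ≤ b ∧ b ≤ 1 := by constructor <;> nlinarith [mul_self_nonneg a, mul_self_nonneg b]
  obtain ⟨ha1, ha2⟩ := ha; obtain ⟨hb1, hb2⟩ := hb
  interval_cases a <;> interval_cases b <;> simp_all <;>
    first
      | (left; decide)
      | (right; left; decide)
      | (right; right; left; decide)
      | (right; right; right; decide)

lemma unit_eq_pow (u : GaussianInt) (hu : IsUnit u) : ∃ k, u = ii ^ k := by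
  rcases unit_eq u hu with h | h | h | h
  · exact ⟨0, by simp [h]⟩
  · refine ⟨2, ?_⟩; rw [h, pow_two, ii_sq]
  · exact ⟨1, by simp [h]⟩
  · refine ⟨3, ?_⟩
    rw [h]
    have : ii ^ 3 = (ii * ii) * ii := by ring
    rw [this, ii_sq]; ring

/-- The first-quadrant region (positive real axis included). -/
def inQ (z : GaussianInt) : Prop := 0 < z.re ∧ 0 ≤ z.im

lemma exists_rot (z : GaussianInt) (hz : z ≠ 0) : ∃ k, inQ (ii ^ k * z) := by
  obtain ⟨a, b⟩ := z
  have hz' : ¬(a = 0 ∧ b = 0) := by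
    intro ⟨h1, h2⟩; exact hz (by ext <;> simp [h1, h2])
  have h1 : ii ^ 1 * (⟨a, b⟩ : GaussianInt) = ⟨-b, a⟩ := by rw [pow_one, ii_mul]
  have h2 : ii ^ 2 * (⟨a, b⟩ : GaussianInt) = ⟨-a, -b⟩ := by
    rw [pow_two, mul_assoc, ii_mul, ii_mul]
  have h3 : ii ^ 3 * (⟨a, b⟩ : GaussianInt) = ⟨b, -a⟩ := by
    have : ii ^ 3 * (⟨a, b⟩ : GaussianInt) = ii * (ii ^ 2 * ⟨a, b⟩) := by ring
    rw [this, h2, ii_mul]; ext <;> simp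
  have h0 : ii ^ 0 * (⟨a, b⟩ : GaussianInt) = ⟨a, b⟩ := by rw [pow_zero, one_mul]
  rcases lt_trichotomy a 0 with ha | ha | ha <;> rcases lt_trichotomy b 0 with hb | hb | hb
  · exact ⟨2, by rw [h2]; exact ⟨by simpa using ha, by simp; omega⟩⟩
  · exact ⟨2, by rw [h2]; exact ⟨by simpa using ha, by simp [hb]⟩⟩
  · exact ⟨3, by rw [h3]; exact ⟨by simpa using hb, by simp; omega⟩⟩
  · exact ⟨1, by rw [h1]; exact ⟨by simpa using hb, by simp [ha]⟩⟩
  · exact absurd ⟨ha, hb⟩ hz'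
  · exact ⟨3, by rw [h3]; exact ⟨by simpa using hb, by simp [ha]⟩⟩
  · exact ⟨1, by rw [h1]; exact ⟨by simpa using hb, by simp; omega⟩⟩
  · exact ⟨0, by rw [h0]; exact ⟨ha, by simp [hb]⟩⟩
  · exact ⟨0, by rw [h0]; exact ⟨ha, le_of_lt hb⟩⟩


lemma inQ_ne_zero {z : GaussianInt} (h : inQ z) : z ≠ 0 := by
  intro h0; rw [h0] at h; exact lt_irrefl 0 (by simpa using h.1)

lemma inQ_rot_eq {z : GaussianInt} (k : ℕ) (hz : inQ z) (h : inQ (ii ^ k * z)) :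
    ii ^ k * z = z := by
  rw [ii_pow_mod] at h ⊢
  have h4 : k % 4 < 4 := Nat.mod_lt _ (by norm_num)
  interval_cases h' : k % 4
  · rw [pow_zero, one_mul]
  · exfalso
    rw [pow_one, ii_mul] at h
    have := h.1; simp only [Zsqrtd.re_neg] at this
    have h2 := hz.2; simp at this; linarith
  · exfalso
    have : ii ^ 2 * z = ⟨-z.re, -z.im⟩ := by
      rw [pow_two, mul_assoc, ii_mul, ii_mul]
    rw [this] at h
    have := h.1; simp at this; linarith [hz.1]
  · exfalso
    have : ii ^ 3 * z = ⟨z.im, -z.re⟩ := by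
      have h3 : ii ^ 3 * z = ii * (ii * (ii * z)) := by ring
      rw [h3, ii_mul, ii_mul, ii_mul]; ext <;> simp
    rw [this] at h
    have := h.2; simp at this; linarith [hz.1]

lemma assoc_unit_mul {u : GaussianInt} (z : GaussianInt) (hu : IsUnit u) :
    Associated (u * z) z := by
  obtain ⟨v, rfl⟩ := hu
  exact ⟨v⁻¹, by rw [mul_comm (v : GaussianInt) z, mul_assoc]; simp⟩

lemma assoc_inQ_eq {z w : GaussianInt} (h : Associated z w) (hz : inQ z) (hw : inQ w) :
    z = w := by
  obtain ⟨u, hu⟩ := h.symm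
  obtain ⟨k, hk⟩ := unit_eq_pow (u : GaussianInt) u.isUnit
  have : z = ii ^ k * w := by rw [← hk, mul_comm]; exact hu.symm
  rw [this] at hz ⊢
  rw [inQ_rot_eq k hw hz]

open Classical in
noncomputable def rep (z : GaussianInt) : GaussianInt :=
  if h : ∃ k, inQ (ii ^ k * z) then ii ^ h.choose * z else z

lemma rep_assoc (z : GaussianInt) : Associated (rep z) z := by
  unfold rep; split
  · exact assoc_unit_mul z (isUnit_ii_pow _)
  · exact Associated.refl z

lemma rep_inQ {z : GaussianInt} (hz : z ≠ 0) : inQ (rep z) := by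
  have h : ∃ k, inQ (ii ^ k * z) := exists_rot z hz
  rw [rep, dif_pos h]
  exact h.choose_spec

lemma rep_eq_self {z : GaussianInt} (hz : inQ z) : rep z = z :=
  assoc_inQ_eq (rep_assoc z) (rep_inQ (inQ_ne_zero hz)) hz

lemma rep_eq_rep {z w : GaussianInt} (h : Associated z w) (hz : z ≠ 0) : rep z = rep w := by
  have hw : w ≠ 0 := by
    intro h0; rw [h0] at h
    exact hz (by simpa using h)
  exact assoc_inQ_eq (((rep_assoc z).trans h).trans (rep_assoc w).symm) (rep_inQ hz) (rep_inQ hw)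

lemma norm_ii_pow (k : ℕ) : (ii ^ k).norm = 1 := by
  have h1 : ii.norm = 1 := by simp [Zsqrtd.norm_def, ii]
  induction k with
  | zero => simp
  | succ k ih => rw [pow_succ, Zsqrtd.norm_mul, ih, h1, one_mul]

lemma rep_norm (z : GaussianInt) : (rep z).norm = z.norm := by
  unfold rep; split
  · rw [Zsqrtd.norm_mul, norm_ii_pow, one_mul]
  · rfl


lemma norm_nonneg' (z : GaussianInt) : 0 ≤ z.norm := Zsqrtd.norm_nonneg (by norm_num) z

lemma prime_of_norm_prime (q : GaussianInt) {p : ℕ} (hp : p.Prime) (h : q.norm = p) :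
    Prime q := by
  rw [← UniqueFactorizationMonoid.irreducible_iff_prime]
  constructor
  · intro hu
    rw [← Zsqrtd.norm_eq_one_iff' (by norm_num) q] at hu
    rw [h] at hu
    exact_mod_cast hp.one_lt.ne' (by exact_mod_cast hu)
  · intro s t hst
    have hn : s.norm.natAbs * t.norm.natAbs = p := by
      rw [← Int.natAbs_mul, ← Zsqrtd.norm_mul, ← hst, h, Int.natAbs_natCast]
    rcases hp.eq_one_or_self_of_dvd s.norm.natAbs ⟨t.norm.natAbs, hn.symm⟩ with h1 | h1
    · left; exact Zsqrtd.norm_eq_one_iff.mp h1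
    · right
      apply Zsqrtd.norm_eq_one_iff.mp
      have hp0 : 0 < p := hp.pos
      rw [h1] at hn
      nlinarith
  
lemma dvd_self_or_conj_of_dvd_norm {q : GaussianInt} (hq : Prime q) (z : GaussianInt)
    (h : q ∣ ((z.norm : ℤ) : GaussianInt)) : q ∣ z ∨ star q ∣ z := by
  rw [Zsqrtd.norm_eq_mul_conj] at h
  rcases hq.2.2 _ _ h with h1 | h1
  · exact Or.inl h1
  · right
    obtain ⟨c, hc⟩ := h1
    exact ⟨star c, by rw [← star_star z, hc, star_mul, mul_comm]⟩

lemma exists_prime_norm_eq (p : ℕ) (hp : p.Prime) (h3 : p % 4 ≠ 3) :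
    ∃ q : GaussianInt, q.norm = p := by
  haveI : Fact p.Prime := ⟨hp⟩
  have hirr : ¬Irreducible (p : GaussianInt) := by
    intro h
    exact h3 (GaussianInt.mod_four_eq_three_of_nat_prime_of_prime p
      (UniqueFactorizationMonoid.irreducible_iff_prime.mp h))
  obtain ⟨a, b, hab⟩ := GaussianInt.sq_add_sq_of_nat_prime_of_not_irreducible p hirr
  refine ⟨⟨a, b⟩, ?_⟩
  rw [Zsqrtd.norm_def]
  have h2 : ((a : ℤ)) ^ 2 + ((b : ℤ)) ^ 2 = p := by exact_mod_cast hab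
  simp only
  ring_nf
  ring_nf at h2
  linarith

lemma int_cast_dvd {a b : ℤ} (h : a ∣ b) : (a : GaussianInt) ∣ (b : GaussianInt) :=
  map_dvd (Int.castRingHom GaussianInt) h

/-- Existence of coprime splitting of a Gaussian integer according to its norm. -/
lemma split : ∀ m : ℕ, ∀ n : ℕ, ∀ z : GaussianInt, m.Coprime n → z.norm = (m : ℤ) * n →
    ∃ x y : GaussianInt, z = x * y ∧ x.norm = m ∧ y.norm = n := by
  intro m
  induction m using Nat.strong_induction_on with
  | _ m IH =>
  intro n z hmn hz
  rcases Nat.eq_zero_or_pos m with hm0 | hm0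
  · subst hm0
    have hz0 : z = 0 := by
      rw [← GaussianInt.norm_eq_zero, hz]; push_cast; ring
    refine ⟨0, 1, by rw [hz0, zero_mul], by simp, ?_⟩
    have hn1 : n = 1 := Nat.coprime_zero_left n |>.mp hmn
    simp [hn1]
  rcases eq_or_lt_of_le (show 1 ≤ m from hm0) with hm1 | hm1
  · refine ⟨1, z, by rw [one_mul], by simp [← hm1], by rw [hz, ← hm1]; push_cast; ring⟩
  -- now 1 < m
  set p := m.minFac with hp_def
  have hp : p.Prime := Nat.minFac_prime (by omega)
  have hpm : p ∣ m := Nat.minFac_dvd m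
  have hpcop : Nat.Coprime p n := Nat.Coprime.coprime_dvd_left hpm hmn
  have hpn : ¬ p ∣ n := fun hd =>
    hp.one_lt.ne' (Nat.dvd_one.mp (hpcop ▸ Nat.dvd_gcd dvd_rfl hd))
  have hpnormz : ((p : ℤ) : GaussianInt) ∣ ((z.norm : ℤ) : GaussianInt) := by
    apply int_cast_dvd
    rw [hz]
    exact Dvd.dvd.mul_right (by exact_mod_cast Int.natCast_dvd_natCast.mpr hpm) _
  by_cases h3 : p % 4 = 3
  · -- inert prime
    haveI : Fact p.Prime := ⟨hp⟩
    have hq : Prime ((p : ℕ) : GaussianInt) :=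
      GaussianInt.prime_of_nat_prime_of_mod_four_eq_three p h3
    have hpz : ((p : ℕ) : GaussianInt) ∣ z := by
      have h' : ((p : ℕ) : GaussianInt) ∣ ((z.norm : ℤ) : GaussianInt) := by
        rw [show (((p : ℕ) : GaussianInt)) = (((p : ℕ) : ℤ) : GaussianInt) by push_cast; rfl]
        exact hpnormz
      rcases dvd_self_or_conj_of_dvd_norm hq z h' with h1 | h1
      · exact h1
      · rwa [star_natCast] at h1
    obtain ⟨z1, hz1⟩ := hpz
    have hnormp : ((p : ℕ) : GaussianInt).norm = (p : ℤ) * p := by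
      rw [Zsqrtd.norm_natCast]
    have hz1norm : (p : ℤ) * p * z1.norm = (m : ℤ) * n := by
      rw [← hnormp, ← Zsqrtd.norm_mul, ← hz1, hz]
    have hp2m : p * p ∣ m := by
      have h1 : (p * p : ℕ) ∣ m * n := by
        refine ⟨z1.norm.natAbs, ?_⟩
        have := hz1norm
        zify
        rw [Int.abs_eq_natAbs, Int.natAbs_of_nonneg (norm_nonneg' z1)]
        linarith
      exact (Nat.Coprime.dvd_of_dvd_mul_right (Nat.Coprime.mul hpcop hpcop) h1)
    obtain ⟨m', hm'⟩ := hp2m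
    have hm'lt : m' < m := by
      have h2 : 2 ≤ p := hp.two_le
      have h4 : 4 ≤ p * p := by nlinarith
      have hm'pos : 0 < m' := by
        rcases Nat.eq_zero_or_pos m' with h | h
        · exfalso; rw [h, mul_zero] at hm'; omega
        · exact h
      rw [hm']; nlinarith
    have hm'cop : m'.Coprime n := Nat.Coprime.coprime_dvd_left ⟨p * p, by rw [hm']; ring⟩ hmn
    have hz1norm' : z1.norm = (m' : ℤ) * n := by
      have hppos : (0 : ℤ) < (p : ℤ) * p := by
        have := hp.pos; positivity
      have : (p : ℤ) * p * z1.norm = (p : ℤ) * p * ((m' : ℤ) * n) := by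
        rw [hz1norm, hm']; push_cast; ring
      exact mul_left_cancel₀ (ne_of_gt hppos) this
    obtain ⟨x, y, hxy, hx, hy⟩ := IH m' hm'lt n z1 hm'cop hz1norm'
    refine ⟨(p : ℕ) * x, y, by rw [hz1, hxy]; ring, ?_, hy⟩
    rw [Zsqrtd.norm_mul, hnormp, hx, hm']; push_cast; ring
  · -- split or ramified prime
    obtain ⟨q0, hq0norm⟩ := exists_prime_norm_eq p hp h3
    have hq0 : Prime q0 := prime_of_norm_prime q0 hp hq0norm
    have hq0dvd : q0 ∣ ((z.norm : ℤ) : GaussianInt) := by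
      refine dvd_trans ?_ hpnormz
      exact ⟨star q0, by rw [← Zsqrtd.norm_eq_mul_conj, hq0norm]⟩
    have hstar : (star q0).norm = p := by rw [Zsqrtd.norm_conj, hq0norm]
    have hexq : ∃ q : GaussianInt, q.norm = p ∧ q ∣ z := by
      rcases dvd_self_or_conj_of_dvd_norm hq0 z hq0dvd with h1 | h1
      · exact ⟨q0, hq0norm, h1⟩
      · exact ⟨star q0, hstar, h1⟩
    obtain ⟨q, hqnorm, hqz⟩ := hexq
    obtain ⟨z1, hz1⟩ := hqz
    have hz1norm : (p : ℤ) * z1.norm = (m : ℤ) * n := by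
      rw [← hqnorm, ← Zsqrtd.norm_mul, ← hz1, hz]
    obtain ⟨m', hm'⟩ := hpm
    have hm'lt : m' < m := by
      have h2 : 2 ≤ p := hp.two_le
      have hm'pos : 0 < m' := by
        rcases Nat.eq_zero_or_pos m' with h | h
        · exfalso; rw [h, mul_zero] at hm'; omega
        · exact h
      rw [hm']; nlinarith
    have hm'cop : m'.Coprime n := Nat.Coprime.coprime_dvd_left ⟨p, by rw [hm']; ring⟩ hmn
    have hz1norm' : z1.norm = (m' : ℤ) * n := by
      have hppos : (0 : ℤ) < (p : ℤ) := by exact_mod_cast hp.pos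
      apply mul_left_cancel₀ (ne_of_gt hppos)
      rw [hz1norm, hm']; push_cast; ring
    obtain ⟨x, y, hxy, hx, hy⟩ := IH m' hm'lt n z1 hm'cop hz1norm'
    refine ⟨q * x, y, by rw [hz1, hxy]; ring, ?_, hy⟩
    rw [Zsqrtd.norm_mul, hqnorm, hx, hm']; push_cast; ring

lemma natAbs_norm_dvd {a b : GaussianInt} (h : a ∣ b) : a.norm.natAbs ∣ b.norm.natAbs := by
  obtain ⟨c, rfl⟩ := h
  rw [Zsqrtd.norm_mul, Int.natAbs_mul]
  exact Dvd.intro _ rfl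

lemma isUnit_of_norm_one {u : GaussianInt} (h : u.norm = 1) : IsUnit u :=
  (Zsqrtd.norm_eq_one_iff' (by norm_num) u).mp h

/-- Uniqueness of coprime splitting, up to units. -/
lemma unique_split {m n : ℕ} (hmn : m.Coprime n) (hm : 0 < m) (hn : 0 < n)
    {x y x' y' : GaussianInt}
    (hx : x.norm = m) (hy : y.norm = n) (hx' : x'.norm = m) (hy' : y'.norm = n)
    (h : Associated (x * y) (x' * y')) : Associated x x' ∧ Associated y y' := by
  classical
  obtain ⟨u, hu⟩ := h
  -- IsCoprime x' y
  have hcop : IsCoprime x' y := by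
    rw [← EuclideanDomain.gcd_isUnit_iff]
    set g := EuclideanDomain.gcd x' y with hg
    have h1 : g.norm.natAbs ∣ m := by
      have := natAbs_norm_dvd (EuclideanDomain.gcd_dvd_left x' y)
      rwa [hx', Int.natAbs_natCast] at this
    have h2 : g.norm.natAbs ∣ n := by
      have := natAbs_norm_dvd (EuclideanDomain.gcd_dvd_right x' y)
      rwa [hy, Int.natAbs_natCast] at this
    have h3 : g.norm.natAbs = 1 := Nat.dvd_one.mp (hmn ▸ Nat.dvd_gcd h1 h2)
    exact Zsqrtd.norm_eq_one_iff.mp h3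
  have hx'0 : x' ≠ 0 := by
    intro h0
    rw [h0, Zsqrtd.norm_zero] at hx'
    exact hm.ne' (by exact_mod_cast hx'.symm)
  have hdvd : x' ∣ x * y := by
    have : x' ∣ (x * y) * u := ⟨y', hu⟩
    exact (Units.dvd_mul_right).mp this
  have hdvdx : x' ∣ x := hcop.dvd_of_dvd_mul_right hdvd
  obtain ⟨c, hc⟩ := hdvdx
  have hcnorm : c.norm = 1 := by
    have h1 : (m : ℤ) = (m : ℤ) * c.norm := by
      conv_lhs => rw [← hx, hc]
      rw [Zsqrtd.norm_mul, hx']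
    have hm0 : (m : ℤ) ≠ 0 := by exact_mod_cast hm.ne'
    have := mul_left_cancel₀ hm0 (by linarith : (m : ℤ) * 1 = (m : ℤ) * c.norm)
    linarith
  have hcunit : IsUnit c := isUnit_of_norm_one hcnorm
  have haxx' : Associated x' x := ⟨hcunit.unit, by rw [IsUnit.unit_spec]; exact hc.symm⟩
  constructor
  · exact haxx'.symm
  · -- cancel x'
    have hy'eq : y' = y * (c * u) := by
      apply mul_left_cancel₀ hx'0
      rw [← hu, hc]; ring
    exact ⟨hcunit.unit * u, by rw [hy'eq, Units.val_mul, IsUnit.unit_spec]⟩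

/-- The number of first-quadrant representatives of norm `n`. -/
noncomputable def g (n : ℕ) : ℕ := Nat.card {z : GaussianInt // z.norm = (n : ℤ) ∧ inQ z}

lemma ii_pow_inj : ∀ k, k < 4 → ∀ j, j < 4 → ii ^ k = ii ^ j → k = j := by decide

lemma norm_ne_zero_of_pos {z : GaussianInt} {n : ℕ} (hn : 0 < n) (h : z.norm = (n : ℤ)) :
    z ≠ 0 := by
  intro h0
  rw [h0, Zsqrtd.norm_zero] at h
  exact hn.ne' (by exact_mod_cast h.symm)

lemma card_eq_four_mul (n : ℕ) (hn : 0 < n) :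
    Nat.card {z : GaussianInt // z.norm = (n : ℤ)} = 4 * g n := by
  have hf : Function.Bijective
      (fun p : Fin 4 × {z : GaussianInt // z.norm = (n : ℤ) ∧ inQ z} =>
        (⟨ii ^ (p.1 : ℕ) * (p.2 : GaussianInt), by
          rw [Zsqrtd.norm_mul, norm_ii_pow, one_mul]; exact p.2.2.1⟩ :
          {z : GaussianInt // z.norm = (n : ℤ)})) := by
    constructor
    · rintro ⟨k, z, hz, hzQ⟩ ⟨j, w, hw, hwQ⟩ h
      simp only [Subtype.mk.injEq] at h
      have hj4 : (j : ℕ) < 4 := j.2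
      have hk4 : (k : ℕ) < 4 := k.2
      have hweq : w = ii ^ (4 - (j : ℕ) + (k : ℕ)) * z := by
        have h1 : ii ^ (4 - (j : ℕ)) * (ii ^ (j : ℕ) * w) = ii ^ (4 - (j : ℕ)) * (ii ^ (k : ℕ) * z) := by
          rw [h]
        rw [← mul_assoc, ← mul_assoc, ← pow_add, ← pow_add] at h1
        have h2 : 4 - (j : ℕ) + (j : ℕ) = 4 := by omega
        rw [h2, ii_pow_four, one_mul] at h1
        exact h1
      have hwz : w = z := by
        rw [hweq]
        exact inQ_rot_eq _ hzQ (hweq ▸ hwQ)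
      subst hwz
      have hz0 : w ≠ 0 := norm_ne_zero_of_pos hn hz
      have : ii ^ (k : ℕ) = ii ^ (j : ℕ) := mul_right_cancel₀ hz0 h
      have hkj : k = j := Fin.ext (ii_pow_inj _ hk4 _ hj4 this)
      subst hkj
      rfl
    · rintro ⟨z, hz⟩
      have hz0 : z ≠ 0 := norm_ne_zero_of_pos hn hz
      obtain ⟨k, hk⟩ := exists_rot z hz0
      set jn := (4 - k % 4) % 4 with hjn
      have hjn4 : jn < 4 := Nat.mod_lt _ (by norm_num)
      have hmod : (jn + k) % 4 = 0 := by omega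
      refine ⟨⟨⟨jn, hjn4⟩, ⟨ii ^ k * z, by
        rw [Zsqrtd.norm_mul, norm_ii_pow, one_mul]; exact ⟨hz, hk⟩⟩⟩, ?_⟩
      simp only [Subtype.mk.injEq]
      rw [← mul_assoc, ← pow_add, ii_pow_mod, hmod, pow_zero, one_mul]
  have := Nat.card_eq_of_bijective _ hf
  rw [Nat.card_prod, Nat.card_eq_fintype_card, Fintype.card_fin] at this
  rw [← this]; rfl

lemma g_mul {m n : ℕ} (hmn : m.Coprime n) (hm : 0 < m) (hn : 0 < n) :
    g (m * n) = g m * g n := by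
  have key : Function.Bijective
      (fun p : {x : GaussianInt // x.norm = (m : ℤ) ∧ inQ x} ×
          {y : GaussianInt // y.norm = (n : ℤ) ∧ inQ y} =>
        (⟨rep ((p.1 : GaussianInt) * (p.2 : GaussianInt)), by
          refine ⟨?_, rep_inQ (mul_ne_zero (norm_ne_zero_of_pos hm p.1.2.1)
            (norm_ne_zero_of_pos hn p.2.2.1))⟩
          rw [rep_norm, Zsqrtd.norm_mul, p.1.2.1, p.2.2.1]; push_cast; ring⟩ :
          {z : GaussianInt // z.norm = ((m * n : ℕ) : ℤ) ∧ inQ z})) := by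
    constructor
    · rintro ⟨⟨x, hx, hxQ⟩, ⟨y, hy, hyQ⟩⟩ ⟨⟨x', hx', hx'Q⟩, ⟨y', hy', hy'Q⟩⟩ h
      simp only [Subtype.mk.injEq, Prod.mk.injEq] at h ⊢
      have hxy0 : x * y ≠ 0 :=
        mul_ne_zero (norm_ne_zero_of_pos hm hx) (norm_ne_zero_of_pos hn hy)
      have hassoc : Associated (x * y) (x' * y') := by
        have h2 : Associated (rep (x * y)) (x' * y') := by rw [h]; exact rep_assoc _
        exact (rep_assoc (x * y)).symm.trans h2
      obtain ⟨hax, hay⟩ := unique_split hmn hm hn hx hy hx' hy' hassoc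
      exact ⟨assoc_inQ_eq hax hxQ hx'Q, assoc_inQ_eq hay hyQ hy'Q⟩
    · rintro ⟨z, hz, hzQ⟩
      have hz' : z.norm = (m : ℤ) * n := by rw [hz]; push_cast; ring
      obtain ⟨x, y, hxy, hx, hy⟩ := split m n z hmn hz'
      have hx0 : x ≠ 0 := norm_ne_zero_of_pos hm hx
      have hy0 : y ≠ 0 := norm_ne_zero_of_pos hn hy
      refine ⟨⟨⟨rep x, by rw [rep_norm]; exact hx, rep_inQ hx0⟩,
        ⟨rep y, by rw [rep_norm]; exact hy, rep_inQ hy0⟩⟩, ?_⟩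
      simp only [Subtype.mk.injEq]
      have h1 : Associated (rep x * rep y) (x * y) :=
        Associated.mul_mul (rep_assoc x) (rep_assoc y)
      have h2 : rep x * rep y ≠ 0 :=
        mul_ne_zero (inQ_ne_zero (rep_inQ hx0)) (inQ_ne_zero (rep_inQ hy0))
      rw [rep_eq_rep h1 h2, ← hxy, rep_eq_self hzQ]
  have := Nat.card_eq_of_bijective _ key
  rw [Nat.card_prod] at this
  exact this.symm

lemma norm_pow (z : GaussianInt) (k : ℕ) : (z ^ k).norm = z.norm ^ k := by
  induction k with
  | zero => simp
  | succ k ih => rw [pow_succ, pow_succ, Zsqrtd.norm_mul, ih]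

lemma card_subtype_unique {P : GaussianInt → Prop} (a : GaussianInt) (ha : P a)
    (h : ∀ b, P b → b = a) : Nat.card {z : GaussianInt // P z} = 1 :=
  Nat.card_eq_one_iff_exists.mpr ⟨⟨a, ha⟩, fun y => Subtype.ext (h y y.2)⟩

/-- The ramified prime. -/
def q2 : GaussianInt := ⟨1, 1⟩

lemma q2_norm : q2.norm = 2 := by simp [Zsqrtd.norm_def, q2]

lemma q2_prime : Prime q2 := prime_of_norm_prime q2 Nat.prime_two (by exact_mod_cast q2_norm)

lemma star_q2 : star q2 = q2 * (-ii) := by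
  ext <;> simp [q2, ii, Zsqrtd.re_mul, Zsqrtd.im_mul]

lemma assoc_two_pow : ∀ k : ℕ, ∀ z : GaussianInt, z.norm = 2 ^ k → Associated z (q2 ^ k) := by
  intro k
  induction k with
  | zero =>
    intro z hz
    rw [pow_zero]
    exact associated_one_iff_isUnit.mpr (isUnit_of_norm_one (by simpa using hz))
  | succ k ih =>
    intro z hz
    have hdvd : q2 ∣ ((z.norm : ℤ) : GaussianInt) := by
      refine dvd_trans ?_ (int_cast_dvd (show (2 : ℤ) ∣ z.norm by rw [hz]; exact dvd_pow_self 2 (Nat.succ_ne_zero k)))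
      exact ⟨star q2, by rw [← Zsqrtd.norm_eq_mul_conj, q2_norm]⟩
    have hq2z : q2 ∣ z := by
      rcases dvd_self_or_conj_of_dvd_norm q2_prime z hdvd with h | h
      · exact h
      · obtain ⟨c, hc⟩ := h
        exact ⟨-ii * c, by rw [hc, star_q2]; ring⟩
    obtain ⟨z1, hz1⟩ := hq2z
    have hz1norm : z1.norm = 2 ^ k := by
      have h1 : q2.norm * z1.norm = z.norm := by rw [← Zsqrtd.norm_mul, ← hz1]
      rw [q2_norm, hz] at h1
      have h2 : (2 : ℤ) ^ (k + 1) = 2 * 2 ^ k := by ring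
      linarith
    have := (ih z1 hz1norm).mul_left q2
    rw [← hz1, ← pow_succ'] at this
    exact this

lemma g_two_pow (k : ℕ) : g (2 ^ k) = 1 := by
  unfold g
  have hq2k : (q2 ^ k).norm = ((2 ^ k : ℕ) : ℤ) := by
    rw [norm_pow, q2_norm]; push_cast; ring
  have h0 : q2 ^ k ≠ 0 := norm_ne_zero_of_pos (pow_pos (by norm_num) k) hq2k
  apply card_subtype_unique (rep (q2 ^ k))
  · exact ⟨by rw [rep_norm]; exact hq2k, rep_inQ h0⟩
  · rintro b ⟨hb, hbQ⟩
    have hassoc : Associated b (q2 ^ k) := assoc_two_pow k b (by rw [hb]; push_cast; ring)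
    rw [← rep_eq_self hbQ]
    exact rep_eq_rep hassoc (inQ_ne_zero hbQ)

lemma assoc_inert_pow {p : ℕ} (hp : p.Prime) (h3 : p % 4 = 3) : ∀ k : ℕ, ∀ z : GaussianInt, z.norm = (p : ℤ) ^ k →
    ∃ j, k = 2 * j ∧ Associated z (((p : ℕ) : GaussianInt) ^ j) := by
  haveI : Fact p.Prime := ⟨hp⟩
  have hq : Prime ((p : ℕ) : GaussianInt) :=
    GaussianInt.prime_of_nat_prime_of_mod_four_eq_three p h3
  have hp1 : 1 < p := hp.one_lt
  intro k
  induction k using Nat.strong_induction_on with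
  | _ k IH =>
  intro z hz
  rcases Nat.eq_zero_or_pos k with hk0 | hk0
  · subst hk0
    exact ⟨0, rfl, by
      rw [pow_zero]
      exact associated_one_iff_isUnit.mpr (isUnit_of_norm_one (by simpa using hz))⟩
  have hdvd : ((p : ℕ) : GaussianInt) ∣ ((z.norm : ℤ) : GaussianInt) := by
    have : (p : ℤ) ∣ z.norm := by rw [hz]; exact dvd_pow_self _ hk0.ne'
    have h2 := int_cast_dvd this
    rwa [show (((p : ℕ) : ℤ) : GaussianInt) = ((p : ℕ) : GaussianInt) by push_cast; rfl] at h2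
  have hpz : ((p : ℕ) : GaussianInt) ∣ z := by
    rcases dvd_self_or_conj_of_dvd_norm hq z hdvd with h | h
    · exact h
    · rwa [star_natCast] at h
  obtain ⟨z1, hz1⟩ := hpz
  have hnorm1 : (p : ℤ) * (p : ℤ) * z1.norm = (p : ℤ) ^ k := by
    rw [← hz, hz1, Zsqrtd.norm_mul, Zsqrtd.norm_natCast]
  have hk2 : 2 ≤ k := by
    by_contra hlt
    have hk1 : k = 1 := by omega
    subst hk1
    have h1 : (0 : ℤ) ≤ z1.norm := norm_nonneg' z1
    have hpp : (1 : ℤ) < p := by exact_mod_cast hp1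
    rcases eq_or_lt_of_le h1 with h2 | h2
    · rw [← h2, mul_zero] at hnorm1; simp at hnorm1; nlinarith
    · nlinarith
  have hz1norm : z1.norm = (p : ℤ) ^ (k - 2) := by
    have hppos : (0 : ℤ) < (p : ℤ) * p := by
      have := hp.pos; positivity
    apply mul_left_cancel₀ (ne_of_gt hppos)
    rw [hnorm1]
    have : (p : ℤ) ^ k = (p : ℤ) ^ (k - 2 + 2) := by congr 1; omega
    rw [this, pow_add]; ring
  obtain ⟨j, hj, hassoc⟩ := IH (k - 2) (by omega) z1 hz1norm
  refine ⟨j + 1, by omega, ?_⟩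
  have := hassoc.mul_left ((p : ℕ) : GaussianInt)
  rw [← hz1] at this
  rw [show ((p : ℕ) : GaussianInt) ^ (j + 1) = ((p : ℕ) : GaussianInt) * ((p : ℕ) : GaussianInt) ^ j by ring]
  exact this

lemma g_inert_pow_even {p : ℕ} (hp : p.Prime) (h3 : p % 4 = 3) (k : ℕ) (hk : Even k) : g (p ^ k) = 1 := by
  unfold g
  obtain ⟨j, hj⟩ := hk
  have hj2 : k = 2 * j := by omega
  have hnormpj : (((p : ℕ) : GaussianInt) ^ j).norm = ((p ^ k : ℕ) : ℤ) := by
    rw [norm_pow, Zsqrtd.norm_natCast, hj2]; push_cast; ring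
  have h0 : ((p : ℕ) : GaussianInt) ^ j ≠ 0 :=
    norm_ne_zero_of_pos (pow_pos hp.pos k) hnormpj
  apply card_subtype_unique (rep (((p : ℕ) : GaussianInt) ^ j))
  · exact ⟨by rw [rep_norm]; exact hnormpj, rep_inQ h0⟩
  · rintro b ⟨hb, hbQ⟩
    obtain ⟨j', hj', hassoc⟩ := assoc_inert_pow hp h3 k b (by rw [hb]; push_cast; ring)
    have : j' = j := by omega
    subst this
    rw [← rep_eq_self hbQ]
    exact rep_eq_rep hassoc (inQ_ne_zero hbQ)

lemma g_inert_pow_odd {p : ℕ} (hp : p.Prime) (h3 : p % 4 = 3) (k : ℕ) (hk : ¬ Even k) : g (p ^ k) = 0 := by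
  unfold g
  haveI : IsEmpty {z : GaussianInt // z.norm = ((p ^ k : ℕ) : ℤ) ∧ inQ z} := by
    constructor
    rintro ⟨b, hb, hbQ⟩
    obtain ⟨j, hj, -⟩ := assoc_inert_pow hp h3 k b (by rw [hb]; push_cast; ring)
    exact hk ⟨j, by omega⟩
  exact Nat.card_of_isEmpty


lemma not_int_sq {p : ℕ} (hp : p.Prime) (x : ℤ) : x * x ≠ (p : ℤ) := by
  intro h
  have h1 : x.natAbs * x.natAbs = p := by
    rw [← Int.natAbs_mul, h, Int.natAbs_natCast]
  rcases hp.eq_one_or_self_of_dvd x.natAbs ⟨x.natAbs, h1.symm⟩ with h2 | h2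
  · rw [h2] at h1; simp at h1; exact hp.one_lt.ne' h1.symm
  · rw [h2] at h1
    nlinarith [hp.one_lt]

lemma not_assoc_conj {p : ℕ} (hp : p.Prime) (h1 : p % 4 = 1) {q : GaussianInt}
    (hq : q.norm = (p : ℤ)) : ¬ Associated q (star q) := by
  rintro ⟨u, hu⟩
  have hnorm : q.re * q.re + q.im * q.im = (p : ℤ) := by
    have := hq; rw [Zsqrtd.norm_def] at this; linarith
  have hodd : ¬ (2 : ℤ) ∣ (p : ℤ) := by
    intro hd
    have : (2 : ℕ) ∣ p := by exact_mod_cast hd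
    omega
  rcases unit_eq (u : GaussianInt) u.isUnit with h | h | h | h
  · rw [h, mul_one] at hu
    have him : - q.im = q.im := by
      have := congrArg Zsqrtd.im hu
      simpa [Zsqrtd.im_star] using this.symm
    have him0 : q.im = 0 := by linarith
    rw [him0] at hnorm
    exact not_int_sq hp q.re (by linarith)
  · rw [h] at hu
    have hre : -q.re = q.re := by
      have := congrArg Zsqrtd.re hu
      simpa [Zsqrtd.re_star] using this
    have hre0 : q.re = 0 := by linarith
    rw [hre0] at hnorm
    exact not_int_sq hp q.im (by linarith)
  · rw [h] at hu
    have h2 : q * ii = ⟨-q.im, q.re⟩ := by rw [mul_comm]; exact ii_mul q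
    rw [h2] at hu
    have hre : -q.im = q.re := congrArg Zsqrtd.re hu
    exact hodd ⟨q.im * q.im, by rw [← hnorm, ← hre]; ring⟩
  · rw [h] at hu
    have h2 : q * (-ii) = ⟨q.im, -q.re⟩ := by
      have : q * (-ii) = -(q * ii) := by ring
      rw [this, mul_comm, ii_mul]
      ext <;> simp
    rw [h2] at hu
    have hre : q.im = q.re := congrArg Zsqrtd.re hu
    exact hodd ⟨q.re * q.re, by rw [← hnorm, hre]; ring⟩

lemma assoc_split_pow {p : ℕ} (hp : p.Prime) {q : GaussianInt} (hq : q.norm = (p : ℤ)) :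
    ∀ k : ℕ, ∀ z : GaussianInt, z.norm = (p : ℤ) ^ k →
      ∃ a b, a + b = k ∧ Associated z (q ^ a * (star q) ^ b) := by
  have hqp : Prime q := prime_of_norm_prime q hp (by exact_mod_cast hq)
  have hsnorm : (star q).norm = (p : ℤ) := by rw [Zsqrtd.norm_conj, hq]
  intro k
  induction k with
  | zero =>
    intro z hz
    exact ⟨0, 0, rfl, by
      rw [pow_zero, pow_zero, one_mul]
      exact associated_one_iff_isUnit.mpr (isUnit_of_norm_one (by simpa using hz))⟩
  | succ k ih =>
    intro z hz
    have hdvd : q ∣ ((z.norm : ℤ) : GaussianInt) := by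
      refine dvd_trans ⟨star q, by rw [← Zsqrtd.norm_eq_mul_conj, hq]⟩ ?_
      exact int_cast_dvd (by rw [hz]; exact dvd_pow_self _ (Nat.succ_ne_zero k))
    rcases dvd_self_or_conj_of_dvd_norm hqp z hdvd with h | h
    · obtain ⟨z1, hz1⟩ := h
      have hz1norm : z1.norm = (p : ℤ) ^ k := by
        have hppos : (0 : ℤ) < p := by exact_mod_cast hp.pos
        apply mul_left_cancel₀ (ne_of_gt hppos)
        have h1 : q.norm * z1.norm = z.norm := by rw [← Zsqrtd.norm_mul, ← hz1]
        rw [hq, hz] at h1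
        rw [h1]; ring
      obtain ⟨a, b, hab, hassoc⟩ := ih z1 hz1norm
      refine ⟨a + 1, b, by omega, ?_⟩
      have := hassoc.mul_left q
      rw [← hz1] at this
      rw [show q ^ (a + 1) * star q ^ b = q * (q ^ a * star q ^ b) by ring]
      exact this
    · obtain ⟨z1, hz1⟩ := h
      have hz1norm : z1.norm = (p : ℤ) ^ k := by
        have hppos : (0 : ℤ) < p := by exact_mod_cast hp.pos
        apply mul_left_cancel₀ (ne_of_gt hppos)
        have h1 : (star q).norm * z1.norm = z.norm := by rw [← Zsqrtd.norm_mul, ← hz1]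
        rw [hsnorm, hz] at h1
        rw [h1]; ring
      obtain ⟨a, b, hab, hassoc⟩ := ih z1 hz1norm
      refine ⟨a, b + 1, by omega, ?_⟩
      have := hassoc.mul_left (star q)
      rw [← hz1] at this
      rw [show q ^ a * star q ^ (b + 1) = star q * (q ^ a * star q ^ b) by ring]
      exact this

lemma split_pow_inj {p : ℕ} (hp : p.Prime) (h1 : p % 4 = 1) {q : GaussianInt}
    (hq : q.norm = (p : ℤ)) {k a b a' b' : ℕ} (hab : a + b = k) (hab' : a' + b' = k)
    (h : Associated (q ^ a * (star q) ^ b) (q ^ a' * (star q) ^ b')) : a = a' := by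
  have hqp : Prime q := prime_of_norm_prime q hp (by exact_mod_cast hq)
  have hsnorm : (star q).norm = (p : ℤ) := by rw [Zsqrtd.norm_conj, hq]
  have hsp : Prime (star q) := prime_of_norm_prime _ hp (by exact_mod_cast hsnorm)
  have hq0 : q ≠ 0 := hqp.ne_zero
  have hs0 : star q ≠ 0 := hsp.ne_zero
  -- general claim: a < a' impossible
  have key : ∀ a b a' b' : ℕ, a + b = k → a' + b' = k → a < a' →
      ¬ Associated (q ^ a * (star q) ^ b) (q ^ a' * (star q) ^ b') := by
    intro a b a' b' hab hab' hlt ⟨u, hu⟩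
    set c := a' - a with hc
    set d := b - b' with hd
    have hc1 : 1 ≤ c := by omega
    have ha' : a' = a + c := by omega
    have hb : b = b' + d := by omega
    have heq : q ^ a * ((star q) ^ b' * ((star q) ^ d * u)) =
        q ^ a * ((star q) ^ b' * q ^ c) := by
      have h2 : (q ^ a * (star q) ^ b) * u = q ^ a' * (star q) ^ b' := hu
      rw [ha', hb, pow_add, pow_add] at h2
      calc q ^ a * ((star q) ^ b' * ((star q) ^ d * u))
          = (q ^ a * ((star q) ^ b' * (star q) ^ d)) * u := by ring
        _ = (q ^ a * q ^ c) * (star q) ^ b' := h2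
        _ = q ^ a * ((star q) ^ b' * q ^ c) := by ring
    have heq2 : (star q) ^ d * u = q ^ c :=
      mul_left_cancel₀ (pow_ne_zero _ hs0)
        (mul_left_cancel₀ (pow_ne_zero _ hq0) heq)
    have hdvd : q ∣ (star q) ^ d * (u : GaussianInt) := by
      rw [heq2]; exact dvd_pow_self _ (by omega)
    have hdvd2 : q ∣ (star q) ^ d := (Units.dvd_mul_right).mp hdvd
    have hdvd3 : q ∣ star q := hqp.dvd_of_dvd_pow hdvd2
    obtain ⟨e, he⟩ := hdvd3
    rcases hsp.irreducible.isUnit_or_isUnit he with h2 | h2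
    · exact hqp.not_unit h2
    · exact not_assoc_conj hp h1 hq ⟨h2.unit, by rw [IsUnit.unit_spec]; exact he.symm⟩
  rcases lt_trichotomy a a' with h2 | h2 | h2
  · exact absurd h (key a b a' b' hab hab' h2)
  · exact h2
  · exact absurd h.symm (key a' b' a b hab' hab h2)

lemma g_split_pow {p : ℕ} (hp : p.Prime) (h1 : p % 4 = 1) (k : ℕ) :
    g (p ^ k) = k + 1 := by
  obtain ⟨q, hq⟩ := exists_prime_norm_eq p hp (by omega)
  have hqp : Prime q := prime_of_norm_prime q hp (by exact_mod_cast hq)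
  have hsnorm : (star q).norm = (p : ℤ) := by rw [Zsqrtd.norm_conj, hq]
  have hnorm : ∀ a : ℕ, a ≤ k → (q ^ a * (star q) ^ (k - a)).norm = ((p ^ k : ℕ) : ℤ) := by
    intro a ha
    rw [Zsqrtd.norm_mul, norm_pow, norm_pow, hq, hsnorm, ← pow_add,
      show a + (k - a) = k by omega]
    push_cast; ring
  have hne : ∀ a : ℕ, a ≤ k → q ^ a * (star q) ^ (k - a) ≠ 0 :=
    fun a ha => norm_ne_zero_of_pos (pow_pos hp.pos k) (hnorm a ha)
  have hbij : Function.Bijective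
      (fun a : Fin (k + 1) =>
        (⟨rep (q ^ (a : ℕ) * (star q) ^ (k - (a : ℕ))), by
          refine ⟨by rw [rep_norm]; exact hnorm _ (by omega), rep_inQ (hne _ (by omega))⟩⟩ :
          {z : GaussianInt // z.norm = ((p ^ k : ℕ) : ℤ) ∧ inQ z})) := by
    constructor
    · rintro ⟨a, ha⟩ ⟨a', ha'⟩ h
      simp only [Subtype.mk.injEq] at h
      have hassoc : Associated (q ^ a * (star q) ^ (k - a)) (q ^ a' * (star q) ^ (k - a')) := by
        have t1 := rep_assoc (q ^ a * (star q) ^ (k - a))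
        have t2 := rep_assoc (q ^ a' * (star q) ^ (k - a'))
        rw [h] at t1
        exact t1.symm.trans t2
      have := split_pow_inj hp h1 hq (show a + (k - a) = k by omega)
        (show a' + (k - a') = k by omega) hassoc
      exact Fin.ext this
    · rintro ⟨z, hz, hzQ⟩
      obtain ⟨a, b, hab, hassoc⟩ := assoc_split_pow hp hq k z (by rw [hz]; push_cast; ring)
      refine ⟨⟨a, by omega⟩, ?_⟩
      simp only [Subtype.mk.injEq]
      have hb : k - a = b := by omega
      rw [hb]
      rw [← rep_eq_rep hassoc (inQ_ne_zero hzQ), rep_eq_self hzQ]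
  have := Nat.card_eq_of_bijective _ hbij
  rw [Nat.card_eq_fintype_card, Fintype.card_fin] at this
  unfold g
  rw [← this]

lemma chi4_two : chi4 2 = 0 := by decide

lemma S_two_pow (k : ℕ) : S (2 ^ k) = 1 := by
  rw [S_prime_pow Nat.prime_two, chi4_two, Finset.sum_range_succ']
  simp [pow_succ]

lemma S_split_pow {p : ℕ} (hp : p.Prime) (h1 : p % 4 = 1) (k : ℕ) :
    S (p ^ k) = (k : ℤ) + 1 := by
  have hc : chi4 p = 1 := by unfold chi4; rw [if_pos h1]
  rw [S_prime_pow hp, hc]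
  simp

lemma S_inert_pow {p : ℕ} (hp : p.Prime) (h3 : p % 4 = 3) (k : ℕ) :
    S (p ^ k) = if Even k then 1 else 0 := by
  have hc : chi4 p = -1 := by unfold chi4; rw [if_neg (by omega), if_pos h3]
  rw [S_prime_pow hp, hc, sum_neg_one_pow]
  rcases Nat.even_or_odd k with h | h
  · simp [h, Nat.even_add_one, Nat.not_even_iff_odd.2 (Even.add_one h)]
  · simp [Nat.not_even_iff_odd.2 h, h.add_one]

lemma S_one : S 1 = 1 := by
  unfold S
  rw [Nat.divisors_one]
  simp [chi4]

lemma g_eq_S : ∀ n : ℕ, 0 < n → (g n : ℤ) = S n := by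
  intro n
  induction n using Nat.recOnPosPrimePosCoprime with
  | prime_pow p k hp hk =>
    intro _
    have hp' : p.Prime := hp
    by_cases h2 : p = 2
    · subst h2
      rw [g_two_pow, S_two_pow]; rfl
    · have h24 : ¬ 2 ∣ p := fun hd =>
        h2 ((Nat.prime_dvd_prime_iff_eq Nat.prime_two hp').mp hd).symm
      have hp4 : 4 ≤ p ∨ p = 3 := by
        have := hp'.two_le; omega
      have hmod : p % 4 = 1 ∨ p % 4 = 3 := by omega
      rcases hmod with hm1 | hm3
      · rw [g_split_pow hp' hm1, S_split_pow hp' hm1]; push_cast; ring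
      · rcases Nat.even_or_odd k with he | ho
        · rw [g_inert_pow_even hp' hm3 k he, S_inert_pow hp' hm3, if_pos he]; rfl
        · rw [g_inert_pow_odd hp' hm3 k (Nat.not_even_iff_odd.2 ho), S_inert_pow hp' hm3,
            if_neg (Nat.not_even_iff_odd.2 ho)]; rfl
  | zero => intro h; omega
  | one =>
    intro _
    have : g 1 = 1 := by simpa using g_two_pow 0
    rw [this, S_one]; rfl
  | coprime a b ha hb hab iha ihb =>
    intro _
    rw [g_mul hab (by omega) (by omega), S_mul hab]
    push_cast
    rw [iha (by omega), ihb (by omega)]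

theorem final (n : ℕ) (hn : 0 < n) :
    (Nat.card {p : ℤ × ℤ // p.1 ^ 2 + p.2 ^ 2 = (n : ℤ)} : ℤ) =
      4 * ∑ d ∈ n.divisors, chi4 d := by
  have hequiv : {p : ℤ × ℤ // p.1 ^ 2 + p.2 ^ 2 = (n : ℤ)} ≃
      {z : GaussianInt // z.norm = (n : ℤ)} :=
    { toFun := fun p => ⟨⟨p.1.1, p.1.2⟩, by
        rw [Zsqrtd.norm_def]
        have := p.2
        simp only
        nlinarith [p.2]⟩
      invFun := fun z => ⟨((z : GaussianInt).re, (z : GaussianInt).im), by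
        have := z.2
        rw [Zsqrtd.norm_def] at this
        simp only
        nlinarith [z.2]⟩
      left_inv := fun p => by ext <;> rfl
      right_inv := fun z => by
        apply Subtype.ext
        ext <;> rfl }
  rw [Nat.card_congr hequiv, card_eq_four_mul n hn]
  have := g_eq_S n hn
  unfold S at this
  push_cast
  rw [this]

end TwoSq

theorem sum_two_squares_count (n : ℕ) (hn : 0 < n) :
    (Nat.card {p : ℤ × ℤ // p.1 ^ 2 + p.2 ^ 2 = (n : ℤ)} : ℤ) =
      4 * ∑ d ∈ n.divisors, chi4 d := TwoSq.final n hn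
end

section
/- For z in the upper half-plane, ∑_{n∈ℤ} e^{πin²z} = ∏_{n=1}^∞ (1 - e^{2πinz})(1 + e^{πi(2n-1)z})². -/
open Finset

/-- Gaussian binomial coefficient, via q-Pascal recursion. -/
def gb (Q : ℂ) : ℕ → ℕ → ℂ
  | 0, 0 => 1
  | 0, _+1 => 0
  | _+1, 0 => 1
  | N+1, k+1 => gb Q N (k+1) + Q^(N-k) * gb Q N k

def ee : ℕ → ℕ
  | 0 => 0
  | k+1 => ee k + k

lemma gb_eq_zero (Q : ℂ) : ∀ N k, N < k → gb Q N k = 0 := by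
  intro N
  induction N with
  | zero => intro k hk; match k, hk with | k+1, _ => rfl
  | succ N ih =>
    intro k hk
    match k, hk with
    | k+1, hk =>
      show gb Q N (k+1) + Q^(N-k) * gb Q N k = 0
      rw [ih (k+1) (by omega), ih k (by omega)]
      ring

lemma gb_zero_right (Q : ℂ) (N : ℕ) : gb Q N 0 = 1 := by cases N <;> rfl

lemma gb_diag (Q : ℂ) : ∀ N, gb Q N N = 1 := by
  intro N
  induction N with
  | zero => rfl
  | succ N ih =>
    show gb Q N (N+1) + Q^(N-N) * gb Q N N = 1
    rw [gb_eq_zero Q N (N+1) (by omega), ih]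
    simp

lemma gauss (Q : ℂ) : ∀ (N : ℕ) (u : ℂ),
    ∏ j ∈ range N, (u + Q^j) = ∑ k ∈ range (N+1), gb Q N k * Q^(ee k) * u^(N-k) := by
  intro N
  induction N with
  | zero => intro u; simp [gb, ee]
  | succ N ih =>
    intro u
    rw [prod_range_succ, ih]
    have h1 : (∑ k ∈ range (N+1), gb Q N k * Q^(ee k) * u^(N-k)) * (u + Q^N)
        = (∑ k ∈ range (N+1), gb Q N k * Q^(ee k) * u^(N-k) * u)
          + ∑ k ∈ range (N+1), gb Q N k * Q^(ee k) * u^(N-k) * Q^N := by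
      rw [sum_mul, ← sum_add_distrib]; exact sum_congr rfl (fun k _ => by ring)
    rw [h1]
    have hsplitT := Finset.sum_range_succ'
      (fun k => gb Q (N+1) k * Q^(ee k) * u^(N+1-k)) (N+1)
    have hsplitA := Finset.sum_range_succ'
      (fun k => gb Q N k * Q^(ee k) * u^(N-k) * u) N
    have hext : (∑ i ∈ range N, gb Q N (i+1) * Q^(ee (i+1)) * u^(N-(i+1)) * u)
        = ∑ i ∈ range (N+1), gb Q N (i+1) * Q^(ee (i+1)) * u^(N-(i+1)) * u := by
      rw [Finset.sum_range_succ, gb_eq_zero Q N (N+1) (by omega)]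
      simp
    have hterm : (∑ k ∈ range (N+1), (gb Q N (k+1) * Q^(ee (k+1)) * u^(N-(k+1)) * u
          + gb Q N k * Q^(ee k) * u^(N-k) * Q^N))
        = ∑ k ∈ range (N+1), gb Q (N+1) (k+1) * Q^(ee (k+1)) * u^(N+1-(k+1)) := by
      refine sum_congr rfl (fun k hk => ?_)
      have hkN : k < N + 1 := mem_range.mp hk
      have hrec : gb Q (N+1) (k+1) = gb Q N (k+1) + Q^(N-k) * gb Q N k := rfl
      have hee : ee (k+1) = ee k + k := rfl
      rw [hrec, hee]
      rcases Nat.lt_or_ge k N with h | h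
      · have h2 : u^(N-(k+1)) * u = u^(N-k) := by
          rw [← pow_succ]; congr 1; omega
        have h3 : (N - k) + (ee k + k) = ee k + N := by omega
        have h4 : N + 1 - (k+1) = N - k := by omega
        rw [h4]
        calc gb Q N (k+1) * Q^(ee k + k) * u^(N-(k+1)) * u + gb Q N k * Q^(ee k) * u^(N-k) * Q^N
            = gb Q N (k+1) * Q^(ee k + k) * u^(N-k)
              + gb Q N k * (Q^((N-k) + (ee k + k))) * u^(N-k) := by
              rw [mul_assoc (gb Q N (k+1) * Q^(ee k + k)), h2, h3, pow_add, pow_add]; ring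
          _ = (gb Q N (k+1) + Q^(N-k) * gb Q N k) * Q^(ee k + k) * u^(N-k) := by
              rw [pow_add]; ring
      · obtain rfl : N = k := by omega
        rw [gb_eq_zero Q N (N+1) (by omega)]
        have h5 : N - (N+1) = 0 := by omega
        have h6 : N + 1 - (N+1) = 0 := by omega
        have h7 : N - N = 0 := by omega
        rw [h5, h6, h7, pow_add]
        ring
    have h0 : gb Q N 0 * Q^(ee 0) * u^(N-0) * u = gb Q (N+1) 0 * Q^(ee 0) * u^(N+1-0) := by
      rw [gb_zero_right, gb_zero_right, Nat.sub_zero, Nat.sub_zero, pow_succ]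
      ring
    rw [hsplitT, hsplitA, hext, ← hterm, sum_add_distrib, h0]
    ring

/-- product formula: `gb Q N k * ∏_{i<k} (1-Q^{i+1}) = ∏_{i<k} (1-Q^{N-k+i+1})` for `k ≤ N`. -/
lemma gb_prod_formula (Q : ℂ) : ∀ N k, k ≤ N →
    gb Q N k * ∏ i ∈ range k, (1 - Q^(i+1)) = ∏ i ∈ range k, (1 - Q^(N-k+i+1)) := by
  intro N
  induction N with
  | zero => intro k hk; interval_cases k; simp [gb_zero_right]
  | succ N ih =>
    intro k hk
    match k with
    | 0 => simp [gb_zero_right]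
    | k+1 =>
      have hrec : gb Q (N+1) (k+1) = gb Q N (k+1) + Q^(N-k) * gb Q N k := rfl
      rcases Nat.lt_or_ge k N with h | h
      · -- k+1 ≤ N
        have ih1 := ih (k+1) (by omega)
        have ih2 := ih k (by omega)
        have hsplit : (∏ i ∈ range (k+1), (1 - Q^(i+1)))
            = (∏ i ∈ range k, (1 - Q^(i+1))) * (1 - Q^(k+1)) := prod_range_succ _ k
        -- LHS pieces
        have hA : gb Q N (k+1) * ∏ i ∈ range (k+1), (1 - Q^(i+1))
            = (1 - Q^(N-k)) * ∏ i ∈ range k, (1 - Q^(N-k+i+1)) := by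
          rw [ih1]
          rw [Finset.prod_range_succ' (fun i => 1 - Q^(N-(k+1)+i+1)) k]
          have h1 : N - (k+1) + 0 + 1 = N - k := by omega
          rw [h1, mul_comm]
          congr 1
          refine prod_congr rfl (fun i _ => ?_)
          congr 2
          omega
        have hB : gb Q N k * ∏ i ∈ range k, (1 - Q^(i+1))
            = ∏ i ∈ range k, (1 - Q^(N-k+i+1)) := ih2
        have htarget : (∏ i ∈ range (k+1), (1 - Q^(N+1-(k+1)+i+1)))
            = (∏ i ∈ range k, (1 - Q^(N-k+i+1))) * (1 - Q^(N+1)) := by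
          rw [prod_range_succ]
          have h1 : N + 1 - (k+1) + k + 1 = N + 1 := by omega
          rw [h1]
          congr 1
          refine prod_congr rfl (fun i _ => ?_)
          congr 2
          omega
        have hNk : Q^(N-k) * Q^(k+1) = Q^(N+1) := by
          rw [← pow_add]; congr 1; omega
        rw [htarget, hrec, add_mul, hA, hsplit]
        linear_combination (Q^(N-k) * (1 - Q^(k+1))) * hB
          - (∏ i ∈ range k, (1 - Q^(N-k+i+1))) * hNk
      · -- k = N
        obtain rfl : N = k := by omega
        rw [hrec, gb_eq_zero Q N (N+1) (by omega), gb_diag]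
        have h7 : N - N = 0 := by omega
        rw [h7]
        have h8 : ∀ i ∈ range (N+1), (1 - Q^(N+1-(N+1)+i+1)) = 1 - Q^(i+1) := by
          intro i _; congr 2; omega
        rw [prod_congr rfl h8]
        ring

section withQ

variable {Q : ℂ} (hQ : ∀ j : ℕ, 1 - Q^(j+1) ≠ 0)
include hQ

lemma D_ne_zero (j : ℕ) : (∏ i ∈ range j, (1 - Q^(i+1))) ≠ 0 :=
  Finset.prod_ne_zero_iff.mpr (fun i _ => hQ i)

lemma gb_symm : ∀ N k, k ≤ N → gb Q N k = gb Q N (N-k) := by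
  intro N k hk
  have h1 := gb_prod_formula Q N k hk
  have h2 := gb_prod_formula Q N (N-k) (by omega)
  have key1 : gb Q N k * ((∏ i ∈ range k, (1 - Q^(i+1))) * ∏ i ∈ range (N-k), (1 - Q^(i+1)))
      = ∏ i ∈ range N, (1 - Q^(i+1)) := by
    have hadd := Finset.prod_range_add (fun i => 1 - Q^(i+1)) (N-k) k
    have hNk : N - k + k = N := by omega
    rw [hNk] at hadd
    rw [hadd]
    rw [mul_comm (∏ i ∈ range k, (1 - Q^(i+1))), ← mul_assoc, mul_comm (gb Q N k),
      mul_assoc, h1]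
  have key2 : gb Q N (N-k) * ((∏ i ∈ range k, (1 - Q^(i+1))) * ∏ i ∈ range (N-k), (1 - Q^(i+1)))
      = ∏ i ∈ range N, (1 - Q^(i+1)) := by
    have hadd := Finset.prod_range_add (fun i => 1 - Q^(i+1)) k (N-k)
    have hNk : k + (N - k) = N := by omega
    rw [hNk] at hadd
    rw [hadd]
    have h2' : gb Q N (N-k) * ∏ i ∈ range (N-k), (1 - Q^(i+1))
        = ∏ i ∈ range (N-k), (1 - Q^(N-(N-k)+i+1)) := h2
    have hee : ∀ i ∈ range (N-k), (1 - Q^(N-(N-k)+i+1)) = 1 - Q^(k+i+1) := by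
      intro i _; congr 2; omega
    rw [prod_congr rfl hee] at h2'
    rw [← mul_assoc, mul_comm (gb Q N (N-k)), mul_assoc, h2']
  have hne : ((∏ i ∈ range k, (1 - Q^(i+1))) * ∏ i ∈ range (N-k), (1 - Q^(i+1))) ≠ 0 :=
    mul_ne_zero (D_ne_zero hQ k) (D_ne_zero hQ (N-k))
  exact mul_right_cancel₀ hne (key1.trans key2.symm)

/-- exponents appearing in the coefficient `gb Q (2m) (m-n) * ∏_{i<m}(1-Q^{i+1})`. -/
def gfun (m n : ℕ) (i : ℕ) : ℕ := if i < m - n then m + n + i + 1 else i + 1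

omit hQ in
lemma A_formula (m n : ℕ) (hn : n ≤ m) :
    gb Q (2*m) (m-n) * (∏ i ∈ range m, (1 - Q^(i+1)))
      = ∏ i ∈ range m, (1 - Q^(gfun m n i)) := by
  have h1 := gb_prod_formula Q (2*m) (m-n) (by omega)
  have h1' : gb Q (2*m) (m-n) * ∏ i ∈ range (m-n), (1 - Q^(i+1))
      = ∏ i ∈ range (m-n), (1 - Q^(m+n+i+1)) := by
    rw [h1]
    refine prod_congr rfl (fun i _ => ?_)
    congr 2
    omega
  have hD : (∏ i ∈ range m, (1 - Q^(i+1)))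
      = (∏ i ∈ range (m-n), (1 - Q^(i+1))) * ∏ i ∈ range n, (1 - Q^((m-n)+i+1)) := by
    have hadd := Finset.prod_range_add (fun i => 1 - Q^(i+1)) (m-n) n
    have hmn : m - n + n = m := by omega
    rw [hmn] at hadd
    exact hadd
  have hRHS : (∏ i ∈ range m, (1 - Q^(gfun m n i)))
      = (∏ i ∈ range (m-n), (1 - Q^(m+n+i+1))) * ∏ i ∈ range n, (1 - Q^((m-n)+i+1)) := by
    have hadd := Finset.prod_range_add (fun i => 1 - Q^(gfun m n i)) (m-n) n
    have hmn : m - n + n = m := by omega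
    rw [hmn] at hadd
    rw [hadd]
    congr 1
    · refine prod_congr rfl (fun i hi => ?_)
      have : i < m - n := mem_range.mp hi
      simp only [gfun, if_pos this]
    · refine prod_congr rfl (fun i _ => ?_)
      have : ¬ (m - n + i < m - n) := by omega
      simp only [gfun, if_neg this]
  rw [hD, hRHS, ← mul_assoc, h1']

end withQ

/-- distance of naturals -/
def dd (m k : ℕ) : ℕ := (m - k) + (k - m)

lemma two_ee : ∀ k, 2 * ee k = k*k - k := by
  intro k
  induction k with
  | zero => rfl
  | succ k ih =>
    show 2 * (ee k + k) = (k+1)*(k+1) - (k+1)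
    have h2 : (k+1)*(k+1) = k*k + 2*k + 1 := by ring
    have hk : k ≤ k * k := by nlinarith
    omega

lemma dd_sq_exponent (m k : ℕ) (hk : k ≤ 2*m) :
    2 * ee k + (2*m-1)*(2*m-k) = dd m k ^ 2 + (3*m*m - 2*m) := by
  have h2 := two_ee k
  have hkk : k ≤ k*k := by nlinarith
  rcases Nat.eq_zero_or_pos m with rfl | hm
  · have : k = 0 := by omega
    subst this
    simp [dd, ee]
  · have h3 : 2*m ≤ 3*m*m := by nlinarith
    have h1m : 1 ≤ 2*m := by omega
    rcases le_total k m with h | h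
    · have hd : dd m k = m - k := by unfold dd; omega
      rw [hd]
      zify [hk, h, hkk, h3, h1m, h2]
      nlinarith [h2, Int.ofNat_le.mpr h]
    · have hd : dd m k = k - m := by unfold dd; omega
      rw [hd]
      zify [hk, h, hkk, h3, h1m, h2]
      nlinarith [h2]

lemma aux_3m (m : ℕ) : m*(m-1) + (2*m-1)*m = 3*m*m - 2*m := by
  cases m with
  | zero => rfl
  | succ m =>
    have h : 2*(m+1) ≤ 3*(m+1)*(m+1) := by nlinarith
    zify [h, show 1 ≤ m + 1 by omega, show 1 ≤ 2*(m+1) by omega]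
    ring

/-- The finite Jacobi-type identity. -/
lemma finite_identity (q : ℂ) (hq0 : q ≠ 0) (m : ℕ) :
    ∏ l ∈ range m, (1 + q^(2*l+1))^2
      = ∑ k ∈ range (2*m+1), gb (q^2) (2*m) k * q^(dd m k ^ 2) := by
  set Q := q^2 with hQdef
  -- Gauss with u = q^(2m-1)
  have hgauss := gauss Q (2*m) (q^(2*m-1))
  -- LHS of gauss as natural q-powers
  have hL : (∏ j ∈ range (2*m), (q^(2*m-1) + Q^j))
      = ∏ j ∈ range (2*m), (q^(2*m-1) + q^(2*j)) := by
    refine prod_congr rfl (fun j _ => ?_)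
    rw [hQdef, ← pow_mul]
  -- RHS of gauss: exponent computation
  have hR : (∑ k ∈ range (2*m+1), gb Q (2*m) k * Q^(ee k) * (q^(2*m-1))^(2*m-k))
      = ∑ k ∈ range (2*m+1), gb Q (2*m) k * q^(dd m k ^ 2) * q^(3*m*m-2*m) := by
    refine sum_congr rfl (fun k hk => ?_)
    have hk' : k ≤ 2*m := by have := mem_range.mp hk; omega
    rw [hQdef, ← pow_mul, ← pow_mul, mul_assoc, mul_assoc, ← pow_add, ← pow_add,
      dd_sq_exponent m k hk']
  -- product side splitting
  have hB : (∏ j ∈ range (2*m), (q^(2*m-1) + q^(2*j)))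
      = q^(3*m*m-2*m) * ∏ l ∈ range m, (1 + q^(2*l+1))^2 := by
    have hsplit := Finset.prod_range_add (fun j => q^(2*m-1) + q^(2*j)) m m
    have h2m : m + m = 2*m := by omega
    rw [h2m] at hsplit
    rw [hsplit]
    have hB1 : (∏ j ∈ range m, (q^(2*m-1) + q^(2*j)))
        = q^(m*(m-1)) * ∏ l ∈ range m, (1 + q^(2*l+1)) := by
      have hfac : ∀ j ∈ range m, (q^(2*m-1) + q^(2*j))
          = q^(2*j) * (1 + q^(2*(m-1-j)+1)) := by
        intro j hj
        have hjm : j < m := mem_range.mp hj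
        rw [mul_add, mul_one, ← pow_add]
        have : 2*j + (2*(m-1-j)+1) = 2*m-1 := by omega
        rw [this]
        ring
      rw [prod_congr rfl hfac, prod_mul_distrib, Finset.prod_pow_eq_pow_sum]
      congr 1
      · congr 1
        rw [← Finset.mul_sum]
        have := Finset.sum_range_id_mul_two m
        omega
      · exact Finset.prod_range_reflect (fun l => 1 + q^(2*l+1)) m
    have hB2 : (∏ i ∈ range m, (q^(2*m-1) + q^(2*(m+i))))
        = q^((2*m-1)*m) * ∏ l ∈ range m, (1 + q^(2*l+1)) := by
      have hfac : ∀ i ∈ range m, (q^(2*m-1) + q^(2*(m+i)))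
          = q^(2*m-1) * (1 + q^(2*i+1)) := by
        intro i hi
        have him : i < m := mem_range.mp hi
        have h9 : 2*(m+i) = (2*m-1) + (2*i+1) := by omega
        rw [h9, pow_add]
        ring
      rw [prod_congr rfl hfac, prod_mul_distrib, Finset.prod_const, Finset.card_range, ← pow_mul]
    rw [hB1, hB2, ← aux_3m m, pow_add, Finset.prod_pow]
    ring
  rw [hL, hB] at hgauss
  rw [hR] at hgauss
  have hpow : (q^(3*m*m-2*m)) ≠ 0 := pow_ne_zero _ hq0
  apply mul_left_cancel₀ hpow
  rw [hgauss, Finset.mul_sum]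
  refine sum_congr rfl (fun k _ => ?_)
  ring

open Filter Topology

/-- `‖∏ (1 + c i) - 1‖ ≤ ∏ (1 + ‖c i‖) - 1`. -/
lemma norm_prod_one_add_sub_one_le {ι : Type*} (s : Finset ι) (c : ι → ℂ) :
    ‖(∏ i ∈ s, (1 + c i)) - 1‖ ≤ (∏ i ∈ s, (1 + ‖c i‖)) - 1 := by
  classical
  induction s using Finset.induction with
  | empty => simp
  | insert _ _ hi ih =>
    rename_i a s
    rw [Finset.prod_insert hi, Finset.prod_insert hi]
    have key : (1 + c a) * ∏ i ∈ s, (1 + c i) - 1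
        = (1 + c a) * ((∏ i ∈ s, (1 + c i)) - 1) + c a := by ring
    rw [key]
    have h1 : ‖(1 + c a) * ((∏ i ∈ s, (1 + c i)) - 1) + c a‖
        ≤ ‖1 + c a‖ * ‖(∏ i ∈ s, (1 + c i)) - 1‖ + ‖c a‖ := by
      refine (norm_add_le _ _).trans ?_
      rw [norm_mul]
    refine h1.trans ?_
    have h2 : ‖(1:ℂ) + c a‖ ≤ 1 + ‖c a‖ := (norm_add_le _ _).trans (by simp)
    have h3 : (0:ℝ) ≤ ‖(∏ i ∈ s, (1 + c i)) - 1‖ := norm_nonneg _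
    have h4 : (1:ℝ) ≤ ∏ i ∈ s, (1 + ‖c i‖) := by
      calc (1:ℝ) = ∏ _i ∈ s, 1 := by simp
        _ ≤ ∏ i ∈ s, (1 + ‖c i‖) :=
          Finset.prod_le_prod (fun i _ => by norm_num) (fun i _ => by linarith [norm_nonneg (c i)])
    nlinarith [norm_nonneg (c a), mul_le_mul h2 ih h3 (by positivity)]

lemma prod_one_add_le_exp {ι : Type*} (s : Finset ι) (r : ι → ℝ) (hr : ∀ i ∈ s, 0 ≤ r i) :
    (∏ i ∈ s, (1 + r i)) ≤ Real.exp (∑ i ∈ s, r i) := by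
  rw [Real.exp_sum]
  refine Finset.prod_le_prod (fun i hi => by linarith [hr i hi]) (fun i hi => ?_)
  have := Real.add_one_le_exp (r i)
  linarith

lemma sum_pow_le_of_inj {ι : Type*} (s : Finset ι) (g : ι → ℕ) {R : ℝ} (hR0 : 0 ≤ R)
    (hR1 : R < 1) (M : ℕ) (hg : ∀ i ∈ s, M ≤ g i)
    (hinj : ∀ i ∈ s, ∀ j ∈ s, g i = g j → i = j) :
    ∑ i ∈ s, R^(g i) ≤ R^M * (1-R)⁻¹ := by
  classical
  have h1 : ∑ i ∈ s, R^(g i) = ∑ j ∈ s.image g, R^j := (Finset.sum_image hinj).symm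
  rw [h1]
  have h2 : ∀ j ∈ s.image g, R^j = R^M * R^(j - M) := by
    intro j hj
    obtain ⟨i, hi, rfl⟩ := Finset.mem_image.mp hj
    rw [← pow_add]
    congr 1
    have := hg i hi
    omega
  rw [Finset.sum_congr rfl h2, ← Finset.mul_sum]
  refine mul_le_mul_of_nonneg_left ?_ (by positivity)
  have hinj2 : ∀ j ∈ s.image g, ∀ j' ∈ s.image g, j - M = j' - M → j = j' := by
    intro j hj j' hj' h
    obtain ⟨i, hi, rfl⟩ := Finset.mem_image.mp hj
    obtain ⟨i', hi', rfl⟩ := Finset.mem_image.mp hj'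
    have := hg i hi
    have := hg i' hi'
    omega
  have h3 : ∑ j ∈ s.image g, R^(j-M) = ∑ k ∈ (s.image g).image (· - M), R^k :=
    (Finset.sum_image hinj2).symm
  rw [h3, ← tsum_geometric_of_lt_one hR0 hR1]
  exact sum_le_hasSum _ (fun k _ => pow_nonneg hR0 k)
    (summable_geometric_of_lt_one hR0 hR1).hasSum

/-- key estimate: product of terms `1 - Q^{g i}` with distinct exponents `≥ M` is close to 1. -/
lemma prod_est {ι : Type*} (s : Finset ι) (g : ι → ℕ) {Q : ℂ} (hQ1 : ‖Q‖ < 1) (M : ℕ)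
    (hg : ∀ i ∈ s, M ≤ g i) (hinj : ∀ i ∈ s, ∀ j ∈ s, g i = g j → i = j) :
    ‖(∏ i ∈ s, (1 - Q^(g i))) - 1‖ ≤ Real.exp (‖Q‖^M * (1-‖Q‖)⁻¹) - 1 := by
  have hR0 : (0:ℝ) ≤ ‖Q‖ := norm_nonneg _
  have h0 : ∀ i ∈ s, (1 - Q^(g i)) = 1 + (-(Q^(g i))) := fun i _ => by ring
  rw [Finset.prod_congr rfl h0]
  refine (norm_prod_one_add_sub_one_le s _).trans ?_
  have h1 : (∏ i ∈ s, (1 + ‖-(Q^(g i))‖)) ≤ Real.exp (∑ i ∈ s, ‖Q‖^(g i)) := by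
    have := prod_one_add_le_exp s (fun i => ‖-(Q^(g i))‖) (fun i _ => norm_nonneg _)
    simpa [norm_pow] using this
  have h2 : Real.exp (∑ i ∈ s, ‖Q‖^(g i)) ≤ Real.exp (‖Q‖^M * (1-‖Q‖)⁻¹) :=
    Real.exp_le_exp.mpr (sum_pow_le_of_inj s g hR0 hQ1 M hg hinj)
  linarith

section coefficients

variable {Q : ℂ} (hQ1 : ‖Q‖ < 1)
include hQ1

lemma one_sub_pow_ne_zero (j : ℕ) : 1 - Q^(j+1) ≠ 0 := by
  intro h
  have h1 : Q^(j+1) = 1 := by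
    have := sub_eq_zero.mp h
    exact this.symm
  have h2 : ‖Q^(j+1)‖ < 1 := by
    rw [norm_pow]
    calc ‖Q‖^(j+1) ≤ ‖Q‖ := pow_le_of_le_one (norm_nonneg _) hQ1.le (by omega)
      _ < 1 := hQ1
  rw [h1, norm_one] at h2
  exact lt_irrefl 1 h2

/-- the normalized coefficient in the finite theta identity. -/
noncomputable def aCoef (Q : ℂ) (m n : ℕ) : ℂ :=
  gb Q (2*m) (m-n) * ∏ i ∈ range m, (1 - Q^(i+1))

lemma aCoef_est (m n : ℕ) (hn : n ≤ m) :
    ‖aCoef Q m n - 1‖ ≤ Real.exp (‖Q‖^(m-n+1) * (1-‖Q‖)⁻¹) - 1 := by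
  rw [aCoef, A_formula m n hn]
  apply prod_est (range m) (gfun m n) hQ1 (m-n+1)
  · intro i _
    unfold gfun
    split_ifs <;> omega
  · intro i hi j hj h
    have h1 : i < m := mem_range.mp hi
    have h2 : j < m := mem_range.mp hj
    unfold gfun at h
    split_ifs at h <;> omega

lemma aCoef_bound (m n : ℕ) (hn : n ≤ m) :
    ‖aCoef Q m n‖ ≤ Real.exp (‖Q‖ * (1-‖Q‖)⁻¹) := by
  have h := aCoef_est hQ1 m n hn
  have h2 : ‖Q‖^(m-n+1) ≤ ‖Q‖ := pow_le_of_le_one (norm_nonneg _) hQ1.le (by omega)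
  have h3 : (0:ℝ) ≤ (1-‖Q‖)⁻¹ := by
    have : (0:ℝ) < 1 - ‖Q‖ := by linarith
    positivity
  have h4 : Real.exp (‖Q‖^(m-n+1) * (1-‖Q‖)⁻¹) ≤ Real.exp (‖Q‖ * (1-‖Q‖)⁻¹) :=
    Real.exp_le_exp.mpr (mul_le_mul_of_nonneg_right h2 h3)
  have h5 : ‖aCoef Q m n‖ ≤ ‖aCoef Q m n - 1‖ + 1 := by
    have := norm_add_le (aCoef Q m n - 1) 1
    simpa using this
  linarith

lemma aCoef_tendsto (n : ℕ) : Tendsto (fun m => aCoef Q m n) atTop (𝓝 1) := by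
  have h1 : Tendsto (fun m : ℕ => m - n + 1) atTop atTop :=
    Filter.tendsto_atTop_atTop.mpr (fun b => ⟨b + n, fun a ha => by omega⟩)
  have h2 : Tendsto (fun k : ℕ => ‖Q‖^k) atTop (𝓝 0) :=
    tendsto_pow_atTop_nhds_zero_of_lt_one (norm_nonneg _) hQ1
  have h3 : Tendsto (fun m : ℕ => ‖Q‖^(m-n+1) * (1-‖Q‖)⁻¹) atTop (𝓝 0) := by
    have := (h2.comp h1).mul_const ((1-‖Q‖)⁻¹)
    simpa using this
  have hb : Tendsto (fun m : ℕ => Real.exp (‖Q‖^(m-n+1) * (1-‖Q‖)⁻¹) - 1) atTop (𝓝 0) := by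
    have h4 := (Real.continuous_exp.tendsto 0).comp h3
    have h5 := h4.sub_const 1
    simpa using h5
  have hev : ∀ᶠ m in atTop, ‖aCoef Q m n - 1‖
      ≤ Real.exp (‖Q‖^(m-n+1) * (1-‖Q‖)⁻¹) - 1 :=
    Filter.eventually_atTop.mpr ⟨n, fun m hm => aCoef_est hQ1 m n hm⟩
  have h6 : Tendsto (fun m => aCoef Q m n - 1) atTop (𝓝 0) := squeeze_zero_norm' hev hb
  have h7 := h6.add_const 1
  simpa using h7

end coefficients

lemma one_add_ne_zero_of_norm_lt {w : ℂ} (hw : ‖w‖ < 1) : 1 + w ≠ 0 := by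
  intro h
  have h1 : w = -1 := by linear_combination h
  rw [h1] at hw
  simp at hw

lemma one_sub_ne_zero_of_norm_lt {w : ℂ} (hw : ‖w‖ < 1) : 1 - w ≠ 0 := by
  intro h
  have h1 : w = 1 := by linear_combination -h
  rw [h1] at hw
  simp at hw

/-- the factors of the triple product. -/
noncomputable def FF (q : ℂ) (j : ℕ) : ℂ := (1 - q^(2*j+2)) * (1 + q^(2*j+1))^2

lemma norm_pow_le_odd {q : ℂ} (hq1 : ‖q‖ < 1) {a b : ℕ} (hab : a ≤ b) :
    ‖q^b‖ ≤ ‖q‖^a := by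
  rw [norm_pow]
  exact pow_le_pow_of_le_one (norm_nonneg q) hq1.le hab

lemma FF_sub_one_bound {q : ℂ} (hq1 : ‖q‖ < 1) (j : ℕ) :
    ‖FF q j - 1‖ ≤ 7 * ‖q‖^(2*j+1) := by
  have hr0 : 0 ≤ ‖q‖ := norm_nonneg q
  have hb0 : (0:ℝ) ≤ ‖q‖^(2*j+1) := by positivity
  have hb3 : ‖q‖^(2*j+1) ≤ 1 := pow_le_one₀ hr0 hq1.le
  have key : FF q j - 1
      = -(q^(2*j+2) * (1 + q^(2*j+1))^2) + (2*q^(2*j+1) + (q^(2*j+1))^2) := by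
    unfold FF
    ring
  rw [key]
  have n1 : ‖q^(2*j+2)‖ ≤ ‖q‖^(2*j+1) := norm_pow_le_odd hq1 (by omega)
  have n2 : ‖(1 + q^(2*j+1))^2‖ ≤ (1 + ‖q‖^(2*j+1))^2 := by
    rw [norm_pow]
    refine pow_le_pow_left₀ (norm_nonneg _) ((norm_add_le _ _).trans ?_) 2
    rw [norm_one, norm_pow]
  have n3 : ‖2*q^(2*j+1) + (q^(2*j+1))^2‖ ≤ 2*‖q‖^(2*j+1) + (‖q‖^(2*j+1))^2 := by
    refine (norm_add_le _ _).trans ?_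
    have e1 : ‖2*q^(2*j+1)‖ = 2 * ‖q‖^(2*j+1) := by
      rw [norm_mul, norm_pow, RCLike.norm_two]
    have e2 : ‖(q^(2*j+1))^2‖ = (‖q‖^(2*j+1))^2 := by
      rw [norm_pow, norm_pow]
    rw [e1, e2]
  refine (norm_add_le _ _).trans ?_
  rw [norm_neg, norm_mul]
  have n4 : ‖q^(2*j+2)‖ * ‖(1 + q^(2*j+1))^2‖ ≤ ‖q‖^(2*j+1) * (1 + ‖q‖^(2*j+1))^2 :=
    mul_le_mul n1 n2 (norm_nonneg _) hb0
  nlinarith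

lemma FF_ne_zero {q : ℂ} (hq1 : ‖q‖ < 1) (j : ℕ) : FF q j ≠ 0 := by
  unfold FF
  refine mul_ne_zero ?_ (pow_ne_zero 2 ?_)
  · exact one_sub_ne_zero_of_norm_lt (norm_pow_le_odd hq1 (by omega : 1 ≤ 2*j+2) |>.trans_lt
      (by simpa using hq1))
  · exact one_add_ne_zero_of_norm_lt (norm_pow_le_odd hq1 (by omega : 1 ≤ 2*j+1) |>.trans_lt
      (by simpa using hq1))

lemma summable_odd_geo {r : ℝ} (hr0 : 0 ≤ r) (hr1 : r < 1) :
    Summable (fun j : ℕ => r^(2*j+1)) := by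
  have hr2 : r^2 < 1 := by nlinarith
  have h : Summable (fun j : ℕ => r * (r^2)^j) :=
    (summable_geometric_of_lt_one (by positivity) hr2).mul_left r
  refine h.congr (fun j => ?_)
  rw [← pow_mul, ← pow_succ']

lemma FF_multipliable {q : ℂ} (hq1 : ‖q‖ < 1) : Multipliable (FF q) := by
  have hr0 : 0 ≤ ‖q‖ := norm_nonneg q
  have hlog : Summable (fun j : ℕ => Complex.log (FF q j)) := by
    refine Summable.of_norm_bounded_eventually (g := fun j => (3/2) * (7 * ‖q‖^(2*j+1)))
      ((summable_odd_geo hr0 hq1).mul_left _ |>.mul_left _) ?_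
    rw [Nat.cofinite_eq_atTop]
    have hto : Tendsto (fun j : ℕ => 7 * ‖q‖^(2*j+1)) atTop (𝓝 0) := by
      have h2 : Tendsto (fun k : ℕ => ‖q‖^k) atTop (𝓝 0) :=
        tendsto_pow_atTop_nhds_zero_of_lt_one hr0 hq1
      have h1 : Tendsto (fun j : ℕ => 2*j+1) atTop atTop :=
        Filter.tendsto_atTop_atTop.mpr (fun b => ⟨b, fun a ha => by omega⟩)
      have := (h2.comp h1).const_mul 7
      simpa using this
    have hev : ∀ᶠ j : ℕ in atTop, 7 * ‖q‖^(2*j+1) ≤ 1/2 :=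
      hto.eventually_le_const (by norm_num)
    filter_upwards [hev] with j hj
    have h1 : ‖FF q j - 1‖ ≤ 1/2 := (FF_sub_one_bound hq1 j).trans hj
    have h2 := Complex.norm_log_one_add_half_le_self h1
    rw [add_sub_cancel] at h2
    exact h2.trans (by nlinarith [FF_sub_one_bound hq1 j])
  exact Complex.multipliable_of_summable_log hlog

/-- partial products of `FF` equal the symmetrized finite sums. -/
lemma partial_prod_eq {q : ℂ} (hq0 : q ≠ 0) (hq1 : ‖q‖ < 1) (m : ℕ) :
    (∏ j ∈ range m, FF q j)
      = ∑ k ∈ range (2*m+1), aCoef (q^2) m (dd m k) * q^(dd m k ^ 2) := by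
  have hQ1 : ‖q^2‖ < 1 := by
    rw [norm_pow]
    nlinarith [norm_nonneg q]
  have hQj := one_sub_pow_ne_zero hQ1
  have hsplit : (∏ j ∈ range m, FF q j)
      = (∏ i ∈ range m, (1 - (q^2)^(i+1))) * ∏ l ∈ range m, (1 + q^(2*l+1))^2 := by
    rw [← prod_mul_distrib]
    refine prod_congr rfl (fun j _ => ?_)
    unfold FF
    rw [← pow_mul]
    have h2 : 2*(j+1) = 2*j+2 := by omega
    rw [h2]
  rw [hsplit, finite_identity q hq0 m, Finset.mul_sum]
  refine sum_congr rfl (fun k hk => ?_)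
  have hk' : k ≤ 2*m := by have := mem_range.mp hk; omega
  have hsym : gb (q^2) (2*m) k = gb (q^2) (2*m) (m - dd m k) := by
    rcases le_total k m with h | h
    · congr 1
      unfold dd
      omega
    · rw [gb_symm hQj (2*m) k hk']
      congr 1
      unfold dd
      omega
  rw [hsym, aCoef]
  ring

/-- the terms of the associated ℤ-indexed sums. -/
noncomputable def fInt (q : ℂ) (m : ℕ) (n : ℤ) : ℂ :=
  if n.natAbs ≤ m then aCoef (q^2) m n.natAbs * q^(n.natAbs^2) else 0

lemma partial_prod_eq_tsum {q : ℂ} (hq0 : q ≠ 0) (hq1 : ‖q‖ < 1) (m : ℕ) :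
    (∏ j ∈ range m, FF q j) = ∑' n : ℤ, fInt q m n := by
  have hzero : ∀ n : ℤ, n ∉ Finset.Icc (-(m:ℤ)) m → fInt q m n = 0 := by
    intro n hn
    rw [fInt, if_neg]
    intro h
    apply hn
    rw [Finset.mem_Icc]
    omega
  have hts : ∑' n : ℤ, fInt q m n = ∑ n ∈ Finset.Icc (-(m:ℤ)) m, fInt q m n :=
    tsum_eq_sum hzero
  rw [hts, partial_prod_eq hq0 hq1 m]
  refine (Finset.sum_nbij' (fun n : ℤ => (n + m).toNat) (fun k : ℕ => (k : ℤ) - m)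
    ?_ ?_ ?_ ?_ ?_).symm
  · intro n hn
    rw [Finset.mem_Icc] at hn
    rw [mem_range]
    omega
  · intro k hk
    have := mem_range.mp hk
    rw [Finset.mem_Icc]
    omega
  · intro n hn
    rw [Finset.mem_Icc] at hn
    omega
  · intro k hk
    have := mem_range.mp hk
    omega
  · intro n hn
    rw [Finset.mem_Icc] at hn
    have hna : dd m ((n + m).toNat) = n.natAbs := by
      unfold dd
      omega
    rw [fInt, hna, if_pos (show n.natAbs ≤ m by omega)]

/-- The Jacobi triple product at x = 1, abstract version. -/
theorem theta_product_abstract {q : ℂ} (hq0 : q ≠ 0) (hq1 : ‖q‖ < 1) :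
    ∑' n : ℤ, q^(n.natAbs^2) = ∏' j : ℕ, FF q j := by
  have hr0 : 0 ≤ ‖q‖ := norm_nonneg q
  have hQ1 : ‖q^2‖ < 1 := by
    rw [norm_pow]
    nlinarith
  have hbound_sum : Summable (fun n : ℤ =>
      Real.exp (‖q^2‖ * (1-‖q^2‖)⁻¹) * ‖q‖^(n.natAbs^2)) := by
    refine Summable.mul_left _ ?_
    have hnat : Summable (fun k : ℕ => ‖q‖^(k^2)) := by
      refine Summable.of_nonneg_of_le (fun k => by positivity) (fun k => ?_)
        (summable_geometric_of_lt_one hr0 hq1)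
      exact pow_le_pow_of_le_one hr0 hq1.le (by nlinarith)
    refine Summable.of_nat_of_neg ?_ ?_
    · refine hnat.congr (fun k => ?_)
      norm_num
    · refine hnat.congr (fun k => ?_)
      norm_num
  have hpointwise : ∀ n : ℤ, Tendsto (fun m => fInt q m n) atTop (𝓝 (q^(n.natAbs^2))) := by
    intro n
    have h1 : Tendsto (fun m => aCoef (q^2) m n.natAbs * q^(n.natAbs^2)) atTop
        (𝓝 (1 * q^(n.natAbs^2))) := (aCoef_tendsto hQ1 n.natAbs).mul_const _
    rw [one_mul] at h1
    refine h1.congr' ?_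
    filter_upwards [Filter.eventually_ge_atTop n.natAbs] with m hm
    rw [fInt, if_pos hm]
  have hdom : ∀ᶠ m : ℕ in atTop, ∀ n : ℤ,
      ‖fInt q m n‖ ≤ Real.exp (‖q^2‖ * (1-‖q^2‖)⁻¹) * ‖q‖^(n.natAbs^2) := by
    refine Filter.Eventually.of_forall (fun m => fun n => ?_)
    rw [fInt]
    split_ifs with h
    · rw [norm_mul, norm_pow]
      exact mul_le_mul (aCoef_bound hQ1 m n.natAbs h) le_rfl (by positivity) (by positivity)
    · simp only [norm_zero]
      positivity
  have hSumTendsto : Tendsto (fun m => ∑' n : ℤ, fInt q m n) atTop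
      (𝓝 (∑' n : ℤ, q^(n.natAbs^2))) :=
    tendsto_tsum_of_dominated_convergence hbound_sum hpointwise hdom
  have hProdTendsto : Tendsto (fun m => ∏ j ∈ range m, FF q j) atTop (𝓝 (∏' j, FF q j)) :=
    (FF_multipliable hq1).hasProd.tendsto_prod_nat
  refine tendsto_nhds_unique ?_ hProdTendsto
  refine hSumTendsto.congr (fun m => ?_)
  rw [partial_prod_eq_tsum hq0 hq1 m]

theorem theta_product_formula (z : ℂ) (hz : 0 < z.im) :
    ∑' n : ℤ, Complex.exp (Real.pi * Complex.I * (n : ℂ) ^ 2 * z) =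
      ∏' n : ℕ,
        (1 - Complex.exp (2 * Real.pi * Complex.I * ((n : ℂ) + 1) * z)) *
          (1 + Complex.exp (Real.pi * Complex.I * (2 * ((n : ℂ) + 1) - 1) * z)) ^ 2 := by
  have hq0 : Complex.exp (Real.pi * Complex.I * z) ≠ 0 := Complex.exp_ne_zero _
  have hre : (↑Real.pi * Complex.I * z).re = -(Real.pi * z.im) := by
    simp [Complex.mul_re, Complex.mul_im]
  have hq1 : ‖Complex.exp (Real.pi * Complex.I * z)‖ < 1 := by
    rw [Complex.norm_exp, hre, Real.exp_lt_one_iff]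
    have := Real.pi_pos
    nlinarith
  have hqpow : ∀ k : ℕ, Complex.exp (Real.pi * Complex.I * z) ^ k
      = Complex.exp ((k : ℂ) * (Real.pi * Complex.I * z)) := by
    intro k
    rw [Complex.exp_nat_mul]
  have hmain := theta_product_abstract hq0 hq1
  have hLHS : (∑' n : ℤ, Complex.exp (Real.pi * Complex.I * (n : ℂ) ^ 2 * z))
      = ∑' n : ℤ, Complex.exp (Real.pi * Complex.I * z)^(n.natAbs^2) := by
    refine tsum_congr (fun n => ?_)
    rw [hqpow (n.natAbs^2)]
    congr 1
    have hcast : ((n.natAbs^2 : ℕ) : ℂ) = (n:ℂ)^2 := by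
      have h1 : ((n.natAbs^2 : ℕ) : ℤ) = n^2 := by
        rw [Nat.cast_pow, Int.natAbs_sq]
      have h2 : (((n.natAbs^2 : ℕ) : ℤ) : ℂ) = ((n^2 : ℤ) : ℂ) := by rw [h1]
      rw [Int.cast_natCast] at h2
      rw [h2]
      push_cast
      ring
    rw [hcast]
    ring
  have hRHS : (∏' n : ℕ,
        (1 - Complex.exp (2 * Real.pi * Complex.I * ((n : ℂ) + 1) * z)) *
          (1 + Complex.exp (Real.pi * Complex.I * (2 * ((n : ℂ) + 1) - 1) * z)) ^ 2)
      = ∏' j : ℕ, FF (Complex.exp (Real.pi * Complex.I * z)) j := by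
    refine tprod_congr (fun j => ?_)
    unfold FF
    congr 2
    · rw [hqpow (2*j+2)]
      congr 1
      push_cast
      ring
    · rw [hqpow (2*j+1)]
      congr 2
      push_cast
      ring
  rw [hLHS, hRHS, hmain]
end

section
/- Let a > 0, b real, c real with D = 4ac - b² > 0 and p(x) = ax² + bx + c. Then ∫_{-∞}^∞ (log p(x))/p(x) dx = (4π/√D)·log(√(D/a)). -/
open Real MeasureTheory intervalIntegral Set

lemma aux_intervalIntegrable_log_sin : IntervalIntegrable (fun x => Real.log (Real.sin x))
    volume 0 (π/2) := by
  have hmaj : IntervalIntegrable (fun x : ℝ => 2 * x ^ (-(1:ℝ)/2) + Real.log (π/2))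
      volume 0 (π/2) :=
    (((intervalIntegrable_rpow' (by norm_num)).const_mul 2).add
      (intervalIntegrable_const))
  apply hmaj.mono_fun
  · exact (Real.measurable_log.comp Real.measurable_sin).aestronglyMeasurable
  · rw [Filter.EventuallyLE, ae_restrict_iff' measurableSet_uIoc]
    filter_upwards with x hx
    rw [uIoc_of_le (by positivity)] at hx
    obtain ⟨hx0, hx1⟩ := hx
    have hsin : 2 / π * x ≤ Real.sin x := Real.mul_le_sin hx0.le hx1
    have hsinpos : 0 < Real.sin x := lt_of_lt_of_le (by positivity) hsin
    have hsinle : Real.sin x ≤ 1 := Real.sin_le_one x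
    have h1 : |Real.log (Real.sin x)| = -Real.log (Real.sin x) := by
      rw [abs_of_nonpos]
      exact Real.log_nonpos hsinpos.le hsinle
    have h2 : -Real.log (Real.sin x) ≤ -Real.log (2 / π * x) := by
      have := Real.log_le_log (by positivity) hsin
      linarith
    have h3 : -Real.log (2 / π * x) = -Real.log x + Real.log (π/2) := by
      rw [Real.log_mul (by positivity) hx0.ne', Real.log_div (by norm_num) pi_ne_zero,
        Real.log_div (by positivity) (by norm_num)]
      ring
    have h4 : -Real.log x ≤ 2 * x ^ (-(1:ℝ)/2) := by
      have hrp : (0:ℝ) < x ^ (-(1:ℝ)/2) := Real.rpow_pos_of_pos hx0 _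
      have := Real.log_le_sub_one_of_pos hrp
      have hlog : Real.log (x ^ (-(1:ℝ)/2)) = (-(1:ℝ)/2) * Real.log x :=
        Real.log_rpow hx0 _
      nlinarith
    calc ‖Real.log (Real.sin x)‖ = |Real.log (Real.sin x)| := rfl
      _ = -Real.log (Real.sin x) := h1
      _ ≤ -Real.log x + Real.log (π/2) := by linarith
      _ ≤ 2 * x ^ (-(1:ℝ)/2) + Real.log (π/2) := by linarith
      _ ≤ ‖2 * x ^ (-(1:ℝ)/2) + Real.log (π/2)‖ := le_abs_self _

lemma aux_intervalIntegrable_log_cos : IntervalIntegrable (fun x => Real.log (Real.cos x))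
    volume 0 (π/2) := by
  have h := aux_intervalIntegrable_log_sin.comp_sub_left (π/2)
  simp only [sub_zero, sub_self] at h
  have h2 := h.symm
  simpa [Real.sin_pi_div_two_sub] using h2

lemma aux_integral_log_sin : ∫ x in (0:ℝ)..(π/2), Real.log (Real.sin x) = -(π/2) * Real.log 2 := by
  set S := ∫ x in (0:ℝ)..(π/2), Real.log (Real.sin x) with hS
  have hCS : ∫ x in (0:ℝ)..(π/2), Real.log (Real.cos x) = S := by
    have := intervalIntegral.integral_comp_sub_left (fun x => Real.log (Real.sin x)) (π/2)
      (a := 0) (b := π/2)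
    simp only [sub_zero, sub_self] at this
    rw [hS, ← this]
    congr 1
    ext x
    rw [Real.sin_pi_div_two_sub]
  have hhalf2 : ∫ x in (π/2)..π, Real.log (Real.sin x) = S := by
    have := intervalIntegral.integral_comp_sub_left (fun x => Real.log (Real.sin x)) π
      (a := 0) (b := π/2)
    simp only [sub_zero] at this
    rw [show π - π/2 = π/2 by ring] at this
    rw [← this, hS]
    congr 1
    ext x
    rw [Real.sin_pi_sub]
  have hfullint : IntervalIntegrable (fun x => Real.log (Real.sin x)) volume 0 π := by
    apply aux_intervalIntegrable_log_sin.trans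
    have h := aux_intervalIntegrable_log_sin.comp_sub_left π
    simp only [sub_zero] at h
    rw [show π - π/2 = π/2 by ring] at h
    have := h.symm
    simpa [Real.sin_pi_sub] using this
  have hfull : ∫ x in (0:ℝ)..π, Real.log (Real.sin x) = 2 * S := by
    rw [← intervalIntegral.integral_add_adjacent_intervals
      (aux_intervalIntegrable_log_sin) (by
        have h := aux_intervalIntegrable_log_sin.comp_sub_left π
        simp only [sub_zero] at h
        rw [show π - π/2 = π/2 by ring] at h
        have := h.symm
        simpa [Real.sin_pi_sub] using this), hhalf2, ← hS]
    ring
  have hdouble : ∫ x in (0:ℝ)..(π/2), Real.log (Real.sin (2*x)) = S := by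
    rw [intervalIntegral.integral_comp_mul_left (fun x => Real.log (Real.sin x))
      (by norm_num : (2:ℝ) ≠ 0)]
    rw [mul_zero, show (2:ℝ) * (π/2) = π by ring, hfull]
    simp [hS]
  have key : S + S = S - π/2 * Real.log 2 := by
    calc S + S = ∫ x in (0:ℝ)..(π/2), (Real.log (Real.sin x) + Real.log (Real.cos x)) := by
          rw [intervalIntegral.integral_add aux_intervalIntegrable_log_sin
            aux_intervalIntegrable_log_cos, hCS]
      _ = ∫ x in (0:ℝ)..(π/2), (Real.log (Real.sin (2*x)) - Real.log 2) := by
          apply intervalIntegral.integral_congr_ae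
          have h1 : ∀ᵐ x : ℝ, x ≠ π/2 := by
            refine (ae_iff.mpr ?_)
            simp [volume_singleton]
          filter_upwards [h1] with x hx hmem
          rw [Set.uIoc_of_le (by positivity)] at hmem
          obtain ⟨hx0, hx1⟩ := hmem
          have hx1' : x < π/2 := lt_of_le_of_ne hx1 hx
          have hsin : 0 < Real.sin x := Real.sin_pos_of_pos_of_lt_pi hx0
            (hx1'.trans (by linarith [Real.pi_pos]))
          have hcos : 0 < Real.cos x := Real.cos_pos_of_mem_Ioo
            ⟨by linarith, hx1'⟩
          rw [Real.sin_two_mul, show 2 * Real.sin x * Real.cos x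
            = (Real.sin x * Real.cos x) * 2 by ring,
            Real.log_mul (by positivity) (by norm_num),
            Real.log_mul hsin.ne' hcos.ne']
          ring
      _ = S - π/2 * Real.log 2 := by
          rw [intervalIntegral.integral_sub _ intervalIntegrable_const, hdouble,
            intervalIntegral.integral_const]
          · simp
          · have h := hfullint.comp_mul_left (c := 2)
            simpa using h
  linarith

lemma aux_integral_log_cos_val :
    ∫ x in (0:ℝ)..(π/2), Real.log (Real.cos x) = -(π/2) * Real.log 2 := by
  have h := intervalIntegral.integral_comp_sub_left (fun x => Real.log (Real.sin x)) (π/2)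
    (a := 0) (b := π/2)
  simp only [sub_zero, sub_self] at h
  rw [← aux_integral_log_sin, ← h]
  congr 1; ext x; rw [Real.sin_pi_div_two_sub]

lemma aux_intervalIntegrable_log_cos_sym : IntervalIntegrable (fun x => Real.log (Real.cos x))
    volume (-(π/2)) (π/2) := by
  apply IntervalIntegrable.trans (b := 0)
  · have h := aux_intervalIntegrable_log_cos.comp_sub_left 0
    simpa [Real.cos_neg] using h.symm
  · exact aux_intervalIntegrable_log_cos

lemma aux_integral_log_cos_sym :
    ∫ x in (-(π/2))..(π/2), Real.log (Real.cos x) = -π * Real.log 2 := by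
  rw [← intervalIntegral.integral_add_adjacent_intervals (b := 0)
    (by have h := aux_intervalIntegrable_log_cos.comp_sub_left 0
        simpa [Real.cos_neg] using h.symm)
    aux_intervalIntegrable_log_cos]
  have h1 : ∫ x in (-(π/2))..(0:ℝ), Real.log (Real.cos x)
      = ∫ x in (0:ℝ)..(π/2), Real.log (Real.cos x) := by
    have := intervalIntegral.integral_comp_neg (fun x => Real.log (Real.cos x))
      (a := 0) (b := π/2)
    simp only [neg_zero] at this
    rw [← this]
    congr 1; ext x; rw [Real.cos_neg]
  rw [h1, aux_integral_log_cos_val]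
  ring


theorem integral_log_quadratic_div_quadratic (a b c : ℝ) (ha : 0 < a)
    (hD : 0 < 4 * a * c - b ^ 2) :
    ∫ x : ℝ, Real.log (a * x ^ 2 + b * x + c) / (a * x ^ 2 + b * x + c) =
      4 * Real.pi / Real.sqrt (4 * a * c - b ^ 2) *
        Real.log (Real.sqrt ((4 * a * c - b ^ 2) / a)) := by
  set D := 4 * a * c - b ^ 2 with hDdef
  set sD := Real.sqrt D with hsD
  have hsDpos : 0 < sD := Real.sqrt_pos.mpr hD
  have hsDsq : sD ^ 2 = D := Real.sq_sqrt hD.le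
  set d : ℝ := sD / (2 * a) with hd
  set k : ℝ := D / (4 * a) with hk
  have hdpos : 0 < d := by positivity
  have hkpos : 0 < k := by rw [hk]; positivity
  set s : Set ℝ := Ioo (-(π/2)) (π/2) with hs
  set f : ℝ → ℝ := fun θ => d * Real.tan θ - b / (2 * a) with hf
  have h_img : f '' s = univ := by
    have h1 : f = (fun y => d * y - b / (2 * a)) ∘ Real.tan := rfl
    rw [h1, Set.image_comp, Real.image_tan_Ioo, Set.image_univ]
    apply Set.range_eq_univ.mpr
    intro z
    exact ⟨(z + b / (2 * a)) / d, by field_simp; ring⟩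
  have h_deriv : ∀ θ ∈ s, HasDerivWithinAt f (d / Real.cos θ ^ 2) s θ := by
    intro θ hθ
    have hcos : Real.cos θ ≠ 0 := (Real.cos_pos_of_mem_Ioo hθ).ne'
    have := ((Real.hasDerivAt_tan hcos).const_mul d).sub_const (b / (2 * a))
    rw [show d / Real.cos θ ^ 2 = d * (1 / Real.cos θ ^ 2) by ring]
    exact this.hasDerivWithinAt
  have h_inj : Set.InjOn f s := by
    intro x hx y hy hxy
    apply Real.injOn_tan hx hy
    have h2 : d * Real.tan x = d * Real.tan y := by
      have h3 := congrArg (fun t => t + b / (2 * a)) hxy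
      simpa [hf] using h3
    exact mul_left_cancel₀ hdpos.ne' h2
  have h_quad : ∀ θ ∈ s, a * f θ ^ 2 + b * f θ + c = k / Real.cos θ ^ 2 := by
    intro θ hθ
    have hcos : Real.cos θ ≠ 0 := (Real.cos_pos_of_mem_Ioo hθ).ne'
    have htan : Real.tan θ ^ 2 + 1 = 1 / Real.cos θ ^ 2 := by
      rw [Real.tan_eq_sin_div_cos, div_pow]
      field_simp
      exact Real.sin_sq_add_cos_sq θ
    have had : a * d ^ 2 = k := by
      rw [hd, hk, div_pow, ← hsDsq]
      field_simp
      ring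
    calc a * f θ ^ 2 + b * f θ + c
        = a * d ^ 2 * (Real.tan θ ^ 2 + 1) + (c - b^2/(4*a) - a*d^2) := by
          rw [hf]; field_simp; ring
      _ = k / Real.cos θ ^ 2 + (c - b^2/(4*a) - k) := by rw [had, htan]; ring
      _ = k / Real.cos θ ^ 2 := by
          have : c - b^2/(4*a) - k = 0 := by rw [hk, hDdef]; field_simp; ring
          rw [this, add_zero]
  have h_cov := MeasureTheory.integral_image_eq_integral_abs_deriv_smul
    measurableSet_Ioo h_deriv h_inj
    (fun x => Real.log (a * x ^ 2 + b * x + c) / (a * x ^ 2 + b * x + c))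
  rw [h_img] at h_cov
  rw [← MeasureTheory.setIntegral_univ, h_cov]
  have h_congr : ∫ θ in s, |d / Real.cos θ ^ 2| •
      (Real.log (a * f θ ^ 2 + b * f θ + c) / (a * f θ ^ 2 + b * f θ + c))
      = ∫ θ in s, (d / k) * (Real.log k - 2 * Real.log (Real.cos θ)) := by
    apply MeasureTheory.setIntegral_congr_fun measurableSet_Ioo
    intro θ hθ
    have hcosp : 0 < Real.cos θ := Real.cos_pos_of_mem_Ioo hθ
    dsimp only
    rw [h_quad θ hθ]
    have hlog : Real.log (k / Real.cos θ ^ 2)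
        = Real.log k - 2 * Real.log (Real.cos θ) := by
      rw [Real.log_div hkpos.ne' (by positivity), Real.log_pow]
      push_cast; ring
    rw [hlog, abs_of_pos (by positivity : (0:ℝ) < d / Real.cos θ ^ 2)]
    rw [smul_eq_mul]
    field_simp
  rw [h_congr]
  have h_ioo : ∫ θ in s, (d / k) * (Real.log k - 2 * Real.log (Real.cos θ))
      = ∫ θ in (-(π/2))..(π/2), (d / k) * (Real.log k - 2 * Real.log (Real.cos θ)) := by
    rw [intervalIntegral.integral_of_le (by linarith [Real.pi_pos]),
      ← MeasureTheory.integral_Ioc_eq_integral_Ioo]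
  rw [h_ioo]
  rw [intervalIntegral.integral_const_mul]
  rw [intervalIntegral.integral_sub intervalIntegrable_const
    (aux_intervalIntegrable_log_cos_sym.const_mul 2)]
  rw [intervalIntegral.integral_const_mul, aux_integral_log_cos_sym,
    intervalIntegral.integral_const]
  have hdk : d / k = 2 / sD := by
    rw [hd, hk, ← hsDsq]
    field_simp
    ring
  have hlogk : Real.log (D / a) = Real.log k + Real.log 4 := by
    have hka : k = D / a / 4 := by rw [hk]; ring
    have h4 := Real.log_div (x := D / a) (div_pos hD ha).ne' (by norm_num : (4:ℝ) ≠ 0)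
    rw [hka, h4]
    ring
  have hlog_sqrt : Real.log (Real.sqrt (D / a)) = Real.log (D / a) / 2 :=
    Real.log_sqrt (by positivity)
  rw [hdk, hlog_sqrt, hlogk]
  have hlog4 : Real.log 4 = 2 * Real.log 2 := by
    rw [show (4:ℝ) = 2^2 by norm_num, Real.log_pow]; push_cast; ring
  rw [hlog4]
  have : π/2 - -(π/2) = π := by ring
  rw [this, smul_eq_mul]
  field_simp
  ring
end
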